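/- arXiv:1604.03878 — 3 statements merged into one kernel-verified Lean document; each statement's English description precedes it below -/
import Mathlib

section
/- Let 𝒩 be a connected plane Euclidean network and let p, q ∈ 𝒩_ℓ be diametral points (d(p,q) = diam(𝒩_ℓ)). If p lies on a pendant edge uv with u pendant, then p = u or p = v; that is, no point in the relative interior of a pendant edge belongs to a diametral pair. -/
open Set
open scoped ENNReal

noncomputable section

attribute [local instance] Classical.propDecidable

/-- Points of the Euclidean plane. -/
abbrev Pt : Type := EuclideanSpace ℝ (Fin 2)

/-- Intrinsic (geodesic) distance inside a set `X ⊆ ℝ²`: the infimum of the lengths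
(total variations) of continuous paths from `p` to `q` whose image lies in `X`. -/
def idist (X : Set Pt) (p q : Pt) : ℝ≥0∞ :=
  ⨅ (γ : ℝ → Pt) (_ : ContinuousOn γ (Set.Icc 0 1)) (_ : γ '' Set.Icc 0 1 ⊆ X)
    (_ : γ 0 = p) (_ : γ 1 = q), eVariationOn γ (Set.Icc 0 1)

/-- Eccentricity of a point within `X`. -/
def ecc (X : Set Pt) (p : Pt) : ℝ≥0∞ := ⨆ q ∈ X, idist X p q

/-- Intrinsic diameter of `X`. -/
def idiam (X : Set Pt) : ℝ≥0∞ := ⨆ p ∈ X, ecc X p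

lemma idist_le_var (X : Set Pt) {γ : ℝ → Pt} {p q : Pt} (h1 : ContinuousOn γ (Set.Icc 0 1))
    (h2 : γ '' Set.Icc 0 1 ⊆ X) (h3 : γ 0 = p) (h4 : γ 1 = q) :
    idist X p q ≤ eVariationOn γ (Set.Icc 0 1) := by
  exact iInf_le_of_le γ (by rw [iInf_pos h1, iInf_pos h2, iInf_pos h3, iInf_pos h4])

lemma edist_le_idist (X : Set Pt) (p q : Pt) : edist p q ≤ idist X p q := by
  refine le_iInf fun γ => le_iInf fun h1 => le_iInf fun h2 => le_iInf fun h3 => le_iInf fun h4 => ?_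
  rw [← h3, ← h4]
  exact eVariationOn.edist_le γ (by simp : (0:ℝ) ∈ Icc (0:ℝ) 1) (by simp : (1:ℝ) ∈ Icc (0:ℝ) 1)

lemma lineMap_lipschitz (p q : Pt) : LipschitzWith (nndist p q) (fun t : ℝ => AffineMap.lineMap p q t) := by
  apply LipschitzWith.of_dist_le_mul
  intro x y
  simp only [AffineMap.lineMap_apply_module]
  rw [dist_eq_norm]
  have h2 : (1 - x) • p + x • q - ((1 - y) • p + y • q) = (x - y) • (q - p) := by module
  rw [h2, norm_smul]
  rw [show dist x y = ‖x - y‖ from dist_eq_norm x y, show (nndist p q : ℝ) = ‖q - p‖ by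
    rw [coe_nndist, dist_eq_norm, norm_sub_rev]]
  ring_nf
  exact le_rfl

lemma idist_le_edist_of_seg {X : Set Pt} {p q : Pt} (h : segment ℝ p q ⊆ X) :
    idist X p q ≤ edist p q := by
  set γ : ℝ → Pt := fun t => AffineMap.lineMap p q t with hγ
  have hcont : Continuous γ := (lineMap_lipschitz p q).continuous
  have himg : γ '' Set.Icc 0 1 ⊆ X := by
    rw [← segment_eq_image_lineMap]; exact h
  have h0 : γ 0 = p := by simp [hγ]
  have h1 : γ 1 = q := by simp [hγ]
  refine (idist_le_var X hcont.continuousOn himg h0 h1).trans ?_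
  have := (lineMap_lipschitz p q).lipschitzOnWith (s := univ)
  have hle := this.comp_eVariationOn_le (g := id) (s := Icc (0:ℝ) 1) (mapsTo_univ _ _)
  have hid : eVariationOn (id : ℝ → ℝ) (Icc 0 1) ≤ ENNReal.ofReal (1 - 0) := by
    have := MonotoneOn.eVariationOn_le (f := (id : ℝ → ℝ)) (s := Icc (0:ℝ) 1)
      (monotoneOn_id) (Set.mem_Icc.2 ⟨le_rfl, zero_le_one⟩) (Set.mem_Icc.2 ⟨zero_le_one, le_rfl⟩)
    simpa using this
  calc eVariationOn γ (Icc 0 1) = eVariationOn (γ ∘ id) (Icc 0 1) := rfl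
    _ ≤ (nndist p q : ℝ≥0∞) * eVariationOn (id : ℝ → ℝ) (Icc 0 1) := hle
    _ ≤ (nndist p q : ℝ≥0∞) * ENNReal.ofReal 1 := by gcongr; simpa using hid
    _ = edist p q := by rw [ENNReal.ofReal_one, mul_one, edist_nndist]

/-- Clamp to [0,1]. -/
def clampI (t : ℝ) : ℝ := max 0 (min 1 t)

lemma clampI_mem (t : ℝ) : clampI t ∈ Icc (0:ℝ) 1 := by
  constructor
  · exact le_max_left _ _
  · rcases le_total 1 t with h | h
    · simp [clampI, min_eq_left h]
    · simp [clampI]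
      
lemma clampI_of_mem {t : ℝ} (h : t ∈ Icc (0:ℝ) 1) : clampI t = t := by
  rcases h with ⟨h0, h1⟩
  simp [clampI, min_eq_right h1, max_eq_right h0]

lemma clampI_continuous : Continuous clampI :=
  continuous_const.max (continuous_const.min continuous_id)

/-- Replace an admissible path by a globally continuous one agreeing on `[0,1]`. -/
lemma exists_global_path {X : Set Pt} {γ : ℝ → Pt} (h1 : ContinuousOn γ (Icc 0 1))
    (h2 : γ '' Icc 0 1 ⊆ X) :
    ∃ δ : ℝ → Pt, Continuous δ ∧ EqOn δ γ (Icc 0 1) ∧ δ '' Icc 0 1 ⊆ X ∧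
      eVariationOn δ (Icc 0 1) = eVariationOn γ (Icc 0 1) := by
  refine ⟨γ ∘ clampI, ?_, ?_, ?_, ?_⟩
  · rw [← continuousOn_univ]
    exact h1.comp clampI_continuous.continuousOn (fun t _ => clampI_mem t)
  · intro t ht; simp [Function.comp, clampI_of_mem ht]
  · intro x hx
    obtain ⟨t, ht, rfl⟩ := hx
    exact h2 ⟨clampI t, clampI_mem t, rfl⟩
  · exact eVariationOn.eq_of_eqOn (fun t ht => by simp [Function.comp, clampI_of_mem ht])

lemma idist_triangle (X : Set Pt) (a b c : Pt) :
    idist X a c ≤ idist X a b + idist X b c := by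
  conv_rhs => rw [idist]
  rw [ENNReal.iInf_add]; refine le_iInf fun γ₁ => ?_
  rw [ENNReal.iInf_add]; refine le_iInf fun g1c => ?_
  rw [ENNReal.iInf_add]; refine le_iInf fun g1i => ?_
  rw [ENNReal.iInf_add]; refine le_iInf fun g10 => ?_
  rw [ENNReal.iInf_add]; refine le_iInf fun g11 => ?_
  conv_rhs => rw [idist]
  rw [ENNReal.add_iInf]; refine le_iInf fun γ₂ => ?_
  rw [ENNReal.add_iInf]; refine le_iInf fun g2c => ?_
  rw [ENNReal.add_iInf]; refine le_iInf fun g2i => ?_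
  rw [ENNReal.add_iInf]; refine le_iInf fun g20 => ?_
  rw [ENNReal.add_iInf]; refine le_iInf fun g21 => ?_
  obtain ⟨δ₁, d1c, d1e, d1i, d1v⟩ := exists_global_path g1c g1i
  obtain ⟨δ₂, d2c, d2e, d2i, d2v⟩ := exists_global_path g2c g2i
  have d10 : δ₁ 0 = a := by rw [d1e (by simp [zero_le_one] : (0:ℝ) ∈ Icc (0:ℝ) 1)]; exact g10
  have d11 : δ₁ 1 = b := by rw [d1e (by simp [zero_le_one] : (1:ℝ) ∈ Icc (0:ℝ) 1)]; exact g11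
  have d20 : δ₂ 0 = b := by rw [d2e (by simp [zero_le_one] : (0:ℝ) ∈ Icc (0:ℝ) 1)]; exact g20
  have d21 : δ₂ 1 = c := by rw [d2e (by simp [zero_le_one] : (1:ℝ) ∈ Icc (0:ℝ) 1)]; exact g21
  set g : ℝ → Pt := fun t => if t ≤ 1/2 then δ₁ (2*t) else δ₂ (2*t - 1) with hg
  have gc : Continuous g := by
    apply Continuous.if_le (d1c.comp (by continuity)) (d2c.comp (by continuity))
      continuous_id continuous_const
    intro x hx
    subst hx
    norm_num [d11, d20]
  have hhalf : (0:ℝ) ≤ 1/2 ∧ (1/2:ℝ) ≤ 1 := by norm_num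
  -- g agrees with δ₁ ∘ (2*) on Icc 0 (1/2)
  have e1 : EqOn g (fun t => δ₁ (2*t)) (Icc 0 (1/2:ℝ)) := by
    intro t ht; simp only [hg]; rw [if_pos ht.2]
  have e2 : EqOn g (fun t => δ₂ (2*t - 1)) (Icc (1/2:ℝ) 1) := by
    intro t ht
    simp only [hg]
    rcases lt_or_ge (1/2:ℝ) t with h | h
    · rw [if_neg (not_le.2 h)]
    · have : t = 1/2 := le_antisymm h ht.1
      subst this
      norm_num [d11, d20]
  have im1 : (fun t : ℝ => 2*t) '' Icc 0 (1/2:ℝ) = Icc (0:ℝ) 1 := by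
    have := image_affine_Icc' (a := (2:ℝ)) (by norm_num) 0 0 (1/2)
    simpa using this
  have im2 : (fun t : ℝ => 2*t - 1) '' Icc (1/2:ℝ) 1 = Icc (0:ℝ) 1 := by
    have h := image_affine_Icc' (a := (2:ℝ)) (by norm_num) (-1) (1/2) 1
    have : (fun t : ℝ => 2*t - 1) = (fun t : ℝ => 2 * t + (-1)) := by funext t; ring
    rw [this, h]
    norm_num
  have v1 : eVariationOn g (Icc 0 (1/2:ℝ)) = eVariationOn δ₁ (Icc 0 1) := by
    rw [eVariationOn.eq_of_eqOn e1]
    have := eVariationOn.comp_eq_of_monotoneOn δ₁ (fun t : ℝ => 2*t)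
      (fun x _ y _ hxy => by dsimp only; linarith : MonotoneOn (fun t : ℝ => 2*t) (Icc 0 (1/2:ℝ)))
    rw [show (fun t : ℝ => δ₁ (2*t)) = δ₁ ∘ (fun t : ℝ => 2*t) from rfl, this, im1]
  have v2 : eVariationOn g (Icc (1/2:ℝ) 1) = eVariationOn δ₂ (Icc 0 1) := by
    rw [eVariationOn.eq_of_eqOn e2]
    have := eVariationOn.comp_eq_of_monotoneOn δ₂ (fun t : ℝ => 2*t - 1)
      (fun x _ y _ hxy => by dsimp only; linarith : MonotoneOn (fun t : ℝ => 2*t - 1) (Icc (1/2:ℝ) 1))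
    rw [show (fun t : ℝ => δ₂ (2*t - 1)) = δ₂ ∘ (fun t : ℝ => 2*t - 1) from rfl, this, im2]
  have gsplit : eVariationOn g (Icc 0 1) = eVariationOn δ₁ (Icc 0 1) + eVariationOn δ₂ (Icc 0 1) := by
    have := eVariationOn.Icc_add_Icc g (s := (univ : Set ℝ)) hhalf.1 hhalf.2 (mem_univ _)
    simp only [univ_inter] at this
    rw [← this, v1, v2]
  have gi : g '' Icc 0 1 ⊆ X := by
    rintro x ⟨t, ht, rfl⟩
    by_cases h : t ≤ 1/2
    · have : g t = δ₁ (2*t) := by simp only [hg]; rw [if_pos h]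
      rw [this]
      exact d1i ⟨2*t, ⟨by linarith [ht.1], by linarith⟩, rfl⟩
    · have : g t = δ₂ (2*t - 1) := by simp only [hg]; rw [if_neg h]
      rw [this]
      push_neg at h
      exact d2i ⟨2*t - 1, ⟨by linarith, by linarith [ht.2]⟩, rfl⟩
  have g0 : g 0 = a := by simp only [hg]; norm_num [d10]
  have g1 : g 1 = c := by
    simp only [hg]
    rw [if_neg (by norm_num : ¬ ((1:ℝ) ≤ 1/2))]
    norm_num [d21]
  calc idist X a c ≤ eVariationOn g (Icc 0 1) := idist_le_var X gc.continuousOn gi g0 g1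
    _ = eVariationOn γ₁ (Icc 0 1) + eVariationOn γ₂ (Icc 0 1) := by rw [gsplit, d1v, d2v]

lemma seg_split {u v p : Pt} (hp : p ∈ segment ℝ u v) :
    segment ℝ u v = segment ℝ u p ∪ segment ℝ p v := by
  apply Subset.antisymm
  · rw [segment_eq_image_lineMap ℝ u v] at hp ⊢
    obtain ⟨s, hs, rfl⟩ := hp
    rintro y ⟨t, ht, rfl⟩
    rcases le_total t s with h | h
    · left
      rw [segment_eq_image_lineMap ℝ]
      rcases eq_or_lt_of_le hs.1 with hs0 | hs0
      · have ht0 : t = 0 := le_antisymm (h.trans hs0.symm.le) ht.1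
        exact ⟨0, ⟨le_rfl, zero_le_one⟩, by rw [ht0]; simp⟩
      · refine ⟨t/s, ⟨div_nonneg ht.1 hs0.le, (div_le_one hs0).2 h⟩, ?_⟩
        rw [AffineMap.lineMap_lineMap_right, div_mul_cancel₀ _ (ne_of_gt hs0)]
    · right
      rw [segment_eq_image_lineMap ℝ]
      rcases eq_or_lt_of_le hs.2 with hs1 | hs1
      · have ht1 : t = 1 := le_antisymm ht.2 (hs1 ▸ h)
        exact ⟨1, ⟨zero_le_one, le_rfl⟩, by rw [ht1, hs1]; simp⟩
      · refine ⟨1 - (1-t)/(1-s), ⟨?_, ?_⟩, ?_⟩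
        · have h1 : (1-t)/(1-s) ≤ 1 := by
            rw [div_le_one (by linarith)]; linarith
          linarith
        · have h0 : 0 ≤ (1-t)/(1-s) := div_nonneg (by linarith [ht.2]) (by linarith)
          linarith
        · rw [AffineMap.lineMap_lineMap_left]
          congr 1
          have hne : (1:ℝ) - s ≠ 0 := by linarith
          field_simp
          ring
  · rintro y (hy | hy)
    · exact (convex_segment u v).segment_subset (left_mem_segment ℝ u v) hp hy
    · exact (convex_segment u v).segment_subset hp (right_mem_segment ℝ u v) hy

lemma seg_inter_eq {u v p x : Pt} (hp : p ∈ segment ℝ u v)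
    (h1 : x ∈ segment ℝ u p) (h2 : x ∈ segment ℝ p v) : x = p := by
  have d1 := dist_add_dist_of_mem_segment h1
  have d2 := dist_add_dist_of_mem_segment h2
  have d3 := dist_add_dist_of_mem_segment hp
  have d4 : dist u v ≤ dist u x + dist x v := dist_triangle u x v
  have : dist x p = 0 := by
    have hc := dist_comm x p
    nlinarith [dist_nonneg (x := x) (y := p)]
  exact dist_eq_zero.1 this

lemma no_path_clopen {Y K O C : Set Pt} (hO : IsOpen O) (hC : IsClosed C)
    (hKO : K = O ∩ Y) (hKC : K = C ∩ Y) {γ : ℝ → Pt}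
    (hγ : ContinuousOn γ (Icc 0 1)) (him : ∀ t ∈ Icc (0:ℝ) 1, γ t ∈ Y)
    (h0 : γ 0 ∈ K) (h1 : γ 1 ∉ K) : False := by
  obtain ⟨uo, huo, hu⟩ := (continuousOn_iff'.1 hγ) O hO
  obtain ⟨vo, hvo, hv⟩ := (continuousOn_iff'.1 hγ) Cᶜ hC.isOpen_compl
  have hmem0 : (0:ℝ) ∈ Icc (0:ℝ) 1 := ⟨le_rfl, zero_le_one⟩
  have hmem1 : (1:ℝ) ∈ Icc (0:ℝ) 1 := ⟨zero_le_one, le_rfl⟩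
  have hsub : Icc (0:ℝ) 1 ⊆ uo ∪ vo := by
    intro t ht
    by_cases hK : γ t ∈ K
    · have : t ∈ γ ⁻¹' O ∩ Icc 0 1 := ⟨(hKO ▸ hK).1, ht⟩
      rw [hu] at this
      exact Or.inl this.1
    · have hYt := him t ht
      have : γ t ∈ Cᶜ := fun hc => hK (hKC ▸ ⟨hc, hYt⟩)
      have : t ∈ γ ⁻¹' Cᶜ ∩ Icc 0 1 := ⟨this, ht⟩
      rw [hv] at this
      exact Or.inr this.1
  have h0u : (Icc (0:ℝ) 1 ∩ uo).Nonempty := by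
    refine ⟨0, hmem0, ?_⟩
    have : (0:ℝ) ∈ γ ⁻¹' O ∩ Icc 0 1 := ⟨(hKO ▸ h0).1, hmem0⟩
    rw [hu] at this
    exact this.1
  have h1v : (Icc (0:ℝ) 1 ∩ vo).Nonempty := by
    refine ⟨1, hmem1, ?_⟩
    have hc : γ 1 ∈ Cᶜ := fun hc => h1 (hKC ▸ ⟨hc, him 1 hmem1⟩)
    have : (1:ℝ) ∈ γ ⁻¹' Cᶜ ∩ Icc 0 1 := ⟨hc, hmem1⟩
    rw [hv] at this
    exact this.1
  obtain ⟨t, ht, htu, htv⟩ := isPreconnected_Icc uo vo huo hvo hsub h0u h1v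
  have htO : γ t ∈ O := by
    have : t ∈ uo ∩ Icc 0 1 := ⟨htu, ht⟩
    rw [← hu] at this
    exact this.1
  have htC : γ t ∈ Cᶜ := by
    have : t ∈ vo ∩ Icc 0 1 := ⟨htv, ht⟩
    rw [← hv] at this
    exact this.1
  have hK : γ t ∈ K := by rw [hKO]; exact ⟨htO, him t ht⟩
  rw [hKC] at hK
  exact htC hK.1

lemma var_ge_of_hit {X : Set Pt} {γ : ℝ → Pt} (hγ : ContinuousOn γ (Icc 0 1))
    (him : γ '' Icc 0 1 ⊆ X) {t : ℝ} (ht : t ∈ Icc (0:ℝ) 1) :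
    edist (γ 0) (γ t) + idist X (γ t) (γ 1) ≤ eVariationOn γ (Icc 0 1) := by
  have hsplit := eVariationOn.Icc_add_Icc γ (s := (univ : Set ℝ)) ht.1 ht.2 (mem_univ _)
  simp only [univ_inter] at hsplit
  rw [← hsplit]
  refine add_le_add ?_ ?_
  · exact eVariationOn.edist_le γ ⟨le_rfl, ht.1⟩ ⟨ht.1, le_rfl⟩
  · set φ : ℝ → ℝ := fun s => t + s * (1 - t) with hφ
    have hmono : MonotoneOn φ (Icc 0 1) := by
      intro x _ y _ hxy
      simp only [hφ]
      nlinarith [ht.2]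
    have hmaps : MapsTo φ (Icc 0 1) (Icc t 1) := by
      intro s hs
      constructor
      · simp only [hφ]; nlinarith [ht.2, hs.1]
      · simp only [hφ]; nlinarith [ht.2, hs.2]
    have hsub : Icc t 1 ⊆ Icc (0:ℝ) 1 := Icc_subset_Icc ht.1 le_rfl
    have hcont : ContinuousOn (γ ∘ φ) (Icc 0 1) := by
      refine hγ.comp (by fun_prop) ?_
      exact fun s hs => hsub (hmaps hs)
    have himg : (γ ∘ φ) '' Icc 0 1 ⊆ X := by
      rintro x ⟨s, hs, rfl⟩
      exact him ⟨φ s, hsub (hmaps hs), rfl⟩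
    have h0' : (γ ∘ φ) 0 = γ t := by simp [hφ]
    have h1' : (γ ∘ φ) 1 = γ 1 := by simp [hφ]
    calc idist X (γ t) (γ 1) ≤ eVariationOn (γ ∘ φ) (Icc 0 1) :=
          idist_le_var X hcont himg h0' h1'
      _ ≤ eVariationOn γ (Icc t 1) := eVariationOn.comp_le_of_monotoneOn γ φ hmono hmaps

lemma idist_ge_of_forced (X : Set Pt) (u q p : Pt)
    (hforce : ∀ γ : ℝ → Pt, ContinuousOn γ (Icc 0 1) → γ '' Icc 0 1 ⊆ X →
      γ 0 = u → γ 1 = q → ∃ t ∈ Icc (0:ℝ) 1, γ t = p) :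
    edist u p + idist X p q ≤ idist X u q := by
  rw [idist]
  refine le_iInf fun γ => le_iInf fun h1 => le_iInf fun h2 => le_iInf fun h3 => le_iInf fun h4 => ?_
  obtain ⟨t, ht, htp⟩ := hforce γ h1 h2 h3 h4
  have := var_ge_of_hit h1 h2 ht
  rw [h3, h4, htp] at this
  exact this

/-- A plane Euclidean network: a finite set of vertices in the plane together with a
finite set of straight-line edges (recorded as ordered pairs of distinct vertices, each
edge recorded exactly once), such that two distinct edges meet only in common endpoints. -/
structure PlaneNetwork where
  V : Finset Pt
  Edg : Finset (Pt × Pt)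
  ends_mem : ∀ e ∈ Edg, e.1 ∈ V ∧ e.2 ∈ V
  ends_ne : ∀ e ∈ Edg, e.1 ≠ e.2
  no_swap : ∀ e ∈ Edg, (e.2, e.1) ∉ Edg
  vertex_cover : ∀ v ∈ V, ∃ e ∈ Edg, v = e.1 ∨ v = e.2
  plane : ∀ e ∈ Edg, ∀ f ∈ Edg, e ≠ f →
    segment ℝ e.1 e.2 ∩ segment ℝ f.1 f.2 ⊆ ({e.1, e.2} ∩ {f.1, f.2} : Set Pt)

namespace PlaneNetwork

/-- The locus of a network: the union of all its (closed) edges. -/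
def locus (N : PlaneNetwork) : Set Pt := ⋃ e ∈ N.Edg, segment ℝ e.1 e.2

/-- A network is connected when its locus is path-connected. -/
def Connected (N : PlaneNetwork) : Prop := IsPathConnected N.locus

/-- `u` and `v` are joined by an edge of the network. -/
def IsEdge (N : PlaneNetwork) (u v : Pt) : Prop := (u, v) ∈ N.Edg ∨ (v, u) ∈ N.Edg

/-- A vertex is pendant if it is an endpoint of exactly one edge. -/
def IsPendantVertex (N : PlaneNetwork) (v : Pt) : Prop :=
  v ∈ N.V ∧ (N.Edg.filter (fun e => e.1 = v ∨ e.2 = v)).card = 1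

/-- The number of pendant vertices of a network. -/
def pendantCount (N : PlaneNetwork) : ℕ := (N.V.filter fun v => N.IsPendantVertex v).card

end PlaneNetwork

namespace PlaneNetwork

variable (N : PlaneNetwork)

lemma seg_sub_locus {e : Pt × Pt} (he : e ∈ N.Edg) : segment ℝ e.1 e.2 ⊆ N.locus :=
  fun x hx => mem_biUnion he hx

lemma isCompact_seg (a b : Pt) : IsCompact (segment ℝ a b) := by
  rw [segment_eq_image_lineMap ℝ]
  exact isCompact_Icc.image (lineMap_lipschitz a b).continuous

lemma isClosed_seg (a b : Pt) : IsClosed (segment ℝ a b) := (isCompact_seg a b).isClosed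

/-- One-step adjacency along edges. -/
def Step (a b : Pt) : Prop := ∃ e ∈ N.Edg, (a = e.1 ∧ b = e.2) ∨ (a = e.2 ∧ b = e.1)

/-- Combinatorial reachability. -/
def Reach (a b : Pt) : Prop := Relation.ReflTransGen (N.Step) a b

lemma step_symm {a b : Pt} (h : N.Step a b) : N.Step b a := by
  obtain ⟨e, he, h | h⟩ := h
  · exact ⟨e, he, Or.inr ⟨h.2, h.1⟩⟩
  · exact ⟨e, he, Or.inl ⟨h.2, h.1⟩⟩

lemma reach_trans {a b c : Pt} (h1 : N.Reach a b) (h2 : N.Reach b c) : N.Reach a c :=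
  Relation.ReflTransGen.trans h1 h2

lemma reach_step {e : Pt × Pt} (he : e ∈ N.Edg) : N.Reach e.1 e.2 :=
  Relation.ReflTransGen.single ⟨e, he, Or.inl ⟨rfl, rfl⟩⟩

lemma reach_step' {e : Pt × Pt} (he : e ∈ N.Edg) : N.Reach e.2 e.1 :=
  Relation.ReflTransGen.single ⟨e, he, Or.inr ⟨rfl, rfl⟩⟩

lemma idist_lt_top_of_reach {a b : Pt} (ha : a ∈ N.locus) (h : N.Reach a b) :
    idist N.locus a b < ⊤ := by
  induction h with
  | refl =>
      have : idist N.locus a a ≤ edist a a := by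
        apply idist_le_edist_of_seg
        rw [segment_same]
        exact singleton_subset_iff.2 ha
      exact lt_of_le_of_lt this (by simp)
  | tail hr hs ih =>
      rename_i b c
      obtain ⟨e, he, hbc | hbc⟩ := hs
      · have hseg : segment ℝ b c ⊆ N.locus := by
          rw [hbc.1, hbc.2]; exact N.seg_sub_locus he
        have h2 : idist N.locus b c ≤ edist b c := idist_le_edist_of_seg hseg
        calc idist N.locus a c ≤ idist N.locus a b + idist N.locus b c := idist_triangle _ _ _ _
          _ < ⊤ := ENNReal.add_lt_top.2 ⟨ih, lt_of_le_of_lt h2 (edist_lt_top b c)⟩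
      · have hseg : segment ℝ b c ⊆ N.locus := by
          rw [hbc.1, hbc.2, segment_symm]; exact N.seg_sub_locus he
        have h2 : idist N.locus b c ≤ edist b c := idist_le_edist_of_seg hseg
        calc idist N.locus a c ≤ idist N.locus a b + idist N.locus b c := idist_triangle _ _ _ _
          _ < ⊤ := ENNReal.add_lt_top.2 ⟨ih, lt_of_le_of_lt h2 (edist_lt_top b c)⟩

lemma reach_of_connected (hconn : N.Connected) {a b : Pt} (ha : a ∈ N.V) (hb : b ∈ N.V) :
    N.Reach a b := by
  by_contra hnr
  set A : Set Pt := ⋃ e ∈ N.Edg.filter (fun e => N.Reach a e.1), segment ℝ e.1 e.2 with hA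
  set B : Set Pt := ⋃ e ∈ N.Edg.filter (fun e => ¬ N.Reach a e.1), segment ℝ e.1 e.2 with hB
  have reach_pair : ∀ e ∈ N.Edg, ∀ x ∈ ({e.1, e.2} : Set Pt), N.Reach a e.1 → N.Reach a x := by
    rintro e he x (rfl | hx) hr
    · exact hr
    · rw [mem_singleton_iff] at hx
      subst hx
      exact N.reach_trans hr (N.reach_step he)
  have reach_endpoint : ∀ e ∈ N.Edg, ∀ x ∈ ({e.1, e.2} : Set Pt), N.Reach a x → N.Reach a e.1 := by
    rintro e he x (rfl | hx) hr
    · exact hr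
    · rw [mem_singleton_iff] at hx
      subst hx
      exact N.reach_trans hr (N.reach_step' he)
  have hdisj : A ∩ B = ∅ := by
    rw [eq_empty_iff_forall_notMem]
    rintro x ⟨hxA, hxB⟩
    simp only [hA, mem_iUnion, Finset.mem_filter, exists_prop] at hxA
    simp only [hB, mem_iUnion, Finset.mem_filter, exists_prop] at hxB
    obtain ⟨e, ⟨he, hre⟩, hxe⟩ := hxA
    obtain ⟨f, ⟨hf, hrf⟩, hxf⟩ := hxB
    have hef : e ≠ f := by rintro rfl; exact hrf hre
    have := N.plane e he f hf hef ⟨hxe, hxf⟩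
    exact hrf (reach_endpoint f hf x this.2 (reach_pair e he x this.1 hre))
  have hAB : N.locus = A ∪ B := by
    apply Subset.antisymm
    · intro x hx
      simp only [PlaneNetwork.locus, mem_iUnion, exists_prop] at hx
      obtain ⟨e, he, hxe⟩ := hx
      by_cases hr : N.Reach a e.1
      · left
        simp only [hA, mem_iUnion, Finset.mem_filter, exists_prop]
        exact ⟨e, ⟨he, hr⟩, hxe⟩
      · right
        simp only [hB, mem_iUnion, Finset.mem_filter, exists_prop]
        exact ⟨e, ⟨he, hr⟩, hxe⟩
    · rintro x (hx | hx)
      · simp only [hA, mem_iUnion, Finset.mem_filter, exists_prop] at hx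
        obtain ⟨e, ⟨he, _⟩, hxe⟩ := hx
        exact N.seg_sub_locus he hxe
      · simp only [hB, mem_iUnion, Finset.mem_filter, exists_prop] at hx
        obtain ⟨e, ⟨he, _⟩, hxe⟩ := hx
        exact N.seg_sub_locus he hxe
  have hAclosed : IsClosed A := by
    apply isClosed_biUnion_finset
    intro e _
    exact isClosed_seg e.1 e.2
  have hBclosed : IsClosed B := by
    apply isClosed_biUnion_finset
    intro e _
    exact isClosed_seg e.1 e.2
  have haA : a ∈ A := by
    obtain ⟨e, he, hae⟩ := N.vertex_cover a ha
    have hra : N.Reach a e.1 := by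
      rcases hae with rfl | rfl
      · exact Relation.ReflTransGen.refl
      · exact N.reach_step' he
    simp only [hA, mem_iUnion, Finset.mem_filter, exists_prop]
    refine ⟨e, ⟨he, hra⟩, ?_⟩
    rcases hae with rfl | rfl
    · exact left_mem_segment ℝ _ _
    · exact right_mem_segment ℝ _ _
  have hbB : b ∈ B := by
    obtain ⟨f, hf, hbf⟩ := N.vertex_cover b hb
    have hrb : ¬ N.Reach a f.1 := by
      intro hr
      apply hnr
      rcases hbf with rfl | rfl
      · exact hr
      · exact N.reach_trans hr (N.reach_step hf)
    simp only [hB, mem_iUnion, Finset.mem_filter, exists_prop]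
    refine ⟨f, ⟨hf, hrb⟩, ?_⟩
    rcases hbf with rfl | rfl
    · exact left_mem_segment ℝ _ _
    · exact right_mem_segment ℝ _ _
  have hpre : IsPreconnected N.locus := hconn.isConnected.isPreconnected
  have hsub : N.locus ⊆ Bᶜ ∪ Aᶜ := by
    intro x hx
    by_cases hxA : x ∈ A
    · left
      intro hxB
      exact (eq_empty_iff_forall_notMem.1 hdisj x) ⟨hxA, hxB⟩
    · right; exact hxA
  have h1 : (N.locus ∩ Bᶜ).Nonempty := ⟨a, hAB ▸ Or.inl haA, fun hc =>
    (eq_empty_iff_forall_notMem.1 hdisj a) ⟨haA, hc⟩⟩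
  have h2 : (N.locus ∩ Aᶜ).Nonempty := ⟨b, hAB ▸ Or.inr hbB, fun hc =>
    (eq_empty_iff_forall_notMem.1 hdisj b) ⟨hc, hbB⟩⟩
  obtain ⟨x, hx, hxB, hxA⟩ := hpre Bᶜ Aᶜ hBclosed.isOpen_compl hAclosed.isOpen_compl hsub h1 h2
  rw [hAB] at hx
  rcases hx with hx | hx
  · exact hxA hx
  · exact hxB hx

end PlaneNetwork


/-- The union of a set with all the segments in a list. -/
def insertSegs (X : Set Pt) (L : List (Pt × Pt)) : Set Pt :=
  X ∪ ⋃ s ∈ L, segment ℝ s.1 s.2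

/-- The segments of the list are inserted iteratively: the endpoints of the first one lie
on `X`, and the endpoints of each subsequent segment lie on the union of `X` with the
previously inserted segments. -/
def ValidSegs (X : Set Pt) : List (Pt × Pt) → Prop
  | [] => True
  | s :: rest => s.1 ∈ X ∧ s.2 ∈ X ∧ ValidSegs (X ∪ segment ℝ s.1 s.2) rest

/-- A shortcut set for `X`: a finite sequence of iteratively inserted segments whose
insertion strictly decreases the intrinsic diameter. -/
def IsShortcutSet (X : Set Pt) (L : List (Pt × Pt)) : Prop :=
  ValidSegs X L ∧ idiam (insertSegs X L) < idiam X

/-- `X` admits a shortcut set. -/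
def HasShortcutSet (X : Set Pt) : Prop := ∃ L, IsShortcutSet X L

/-- The shortcut number: the minimum size of a shortcut set. -/
def scn (X : Set Pt) : ℕ :=
  sInf {k | ∃ L : List (Pt × Pt), L.length = k ∧ IsShortcutSet X L}

/-- If `p`, `q` are diametral points and `p` lies on a pendant edge `uv` with
`u` pendant, then `p = u` or `p = v`: no point in the relative interior of a pendant edge
belongs to a diametral pair. -/
theorem stmt8 (N : PlaneNetwork) (hconn : N.Connected) (p q u v : Pt)
    (hp : p ∈ N.locus) (hq : q ∈ N.locus)
    (hdiam : idist N.locus p q = idiam N.locus)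
    (he : N.IsEdge u v) (hu : N.IsPendantVertex u)
    (hpe : p ∈ segment ℝ u v) :
    p = u ∨ p = v := by
  by_contra hcon
  push_neg at hcon
  obtain ⟨hpu, hpv⟩ := hcon
  -- the unique edge at the pendant vertex u
  obtain ⟨e₀, he₀, hise, hset⟩ : ∃ e₀ ∈ N.Edg, segment ℝ e₀.1 e₀.2 = segment ℝ u v ∧
      ({e₀.1, e₀.2} : Set Pt) = ({u, v} : Set Pt) := by
    rcases he with h | h
    · exact ⟨(u, v), h, rfl, rfl⟩
    · exact ⟨(v, u), h, segment_symm ℝ v u, by simp [Set.pair_comm]⟩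
  have he₀u : e₀.1 = u ∨ e₀.2 = u := by
    have : u ∈ ({e₀.1, e₀.2} : Set Pt) := by rw [hset]; exact Or.inl rfl
    rcases this with h | h
    · exact Or.inl h.symm
    · exact Or.inr (mem_singleton_iff.1 h).symm
  have hfilter : N.Edg.filter (fun e => e.1 = u ∨ e.2 = u) = {e₀} := by
    obtain ⟨w, hw⟩ := Finset.card_eq_one.1 hu.2
    have hmem : e₀ ∈ N.Edg.filter (fun e => e.1 = u ∨ e.2 = u) :=
      Finset.mem_filter.2 ⟨he₀, he₀u⟩
    rw [hw] at hmem ⊢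
    rw [Finset.mem_singleton.1 hmem]
  have huniq : ∀ f ∈ N.Edg, f ≠ e₀ → u ∉ segment ℝ f.1 f.2 := by
    intro f hf hfe hin
    have hu2 : u ∈ segment ℝ e₀.1 e₀.2 := by
      rw [hise]; exact left_mem_segment ℝ u v
    have := N.plane e₀ he₀ f hf (fun h => hfe h.symm) ⟨hu2, hin⟩
    have hf2 : f.1 = u ∨ f.2 = u := by
      rcases this.2 with h | h
      · exact Or.inl h.symm
      · exact Or.inr (mem_singleton_iff.1 h).symm
    have : f ∈ N.Edg.filter (fun e => e.1 = u ∨ e.2 = u) := Finset.mem_filter.2 ⟨hf, hf2⟩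
    rw [hfilter, Finset.mem_singleton] at this
    exact hfe this
  have hplane' : ∀ f ∈ N.Edg, f ≠ e₀ →
      segment ℝ u v ∩ segment ℝ f.1 f.2 ⊆ ({u, v} : Set Pt) := by
    intro f hf hfe x hx
    have := N.plane e₀ he₀ f hf (fun h => hfe h.symm) ⟨hise ▸ hx.1, hx.2⟩
    exact hset ▸ this.1
  have hsegup : segment ℝ u p ⊆ segment ℝ u v :=
    (convex_segment u v).segment_subset (left_mem_segment ℝ u v) hpe
  have hsegloc : segment ℝ u v ⊆ N.locus := hise ▸ N.seg_sub_locus he₀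
  have hsup : segment ℝ u p ⊆ N.locus := hsegup.trans hsegloc
  have huloc : u ∈ N.locus := hsegloc (left_mem_segment ℝ u v)
  have hvloc : v ∈ N.locus := hsegloc (right_mem_segment ℝ u v)
  have hvnotup : v ∉ segment ℝ u p := by
    intro hvin
    have d1 := dist_add_dist_of_mem_segment hpe
    have d2 := dist_add_dist_of_mem_segment hvin
    have : dist p v = 0 := by
      have hc1 := dist_comm v p
      nlinarith [dist_nonneg (x := p) (y := v)]
    exact hpv (dist_eq_zero.1 this)
  -- the half-open segment [u, p)
  set K : Set Pt := segment ℝ u p \ {p} with hK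
  set Y : Set Pt := N.locus \ {p} with hY
  have hKC : K = segment ℝ u p ∩ Y := by
    rw [hK, hY]
    ext x
    constructor
    · rintro ⟨hx1, hx2⟩
      exact ⟨hx1, hsup hx1, hx2⟩
    · rintro ⟨hx1, _, hx2⟩
      exact ⟨hx1, hx2⟩
  -- the bad set avoided by points of K
  set Sbad : Set Pt := segment ℝ p v ∪ ⋃ f ∈ N.Edg.erase e₀, segment ℝ f.1 f.2 with hSbad
  have hSclosed : IsClosed Sbad := by
    apply IsClosed.union (PlaneNetwork.isClosed_seg p v)
    apply isClosed_biUnion_finset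
    intro f _
    exact PlaneNetwork.isClosed_seg f.1 f.2
  have hSne : Sbad.Nonempty := ⟨p, Or.inl (left_mem_segment ℝ p v)⟩
  have hxnotbad : ∀ x ∈ K, x ∉ Sbad := by
    rintro x ⟨hx1, hx2⟩ (hbad | hbad)
    · exact hx2 (seg_inter_eq hpe hx1 hbad)
    · simp only [mem_iUnion, exists_prop] at hbad
      obtain ⟨f, hf, hxf⟩ := hbad
      have hfE : f ∈ N.Edg := Finset.mem_of_mem_erase hf
      have hfne : f ≠ e₀ := Finset.ne_of_mem_erase hf
      have := hplane' f hfE hfne ⟨hsegup hx1, hxf⟩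
      rcases this with h | h
      · subst h
        exact huniq f hfE hfne hxf
      · rw [mem_singleton_iff] at h
        subst h
        exact hvnotup hx1
  have hball : ∀ x ∈ K, Metric.ball x (Metric.infDist x Sbad) ∩ Y ⊆ K := by
    rintro x hxK y ⟨hyb, hyloc, hyp⟩
    have hynotbad : y ∉ Sbad := by
      intro hybad
      have := Metric.infDist_le_dist_of_mem (x := x) hybad
      rw [Metric.mem_ball] at hyb
      rw [dist_comm] at this
      linarith
    simp only [PlaneNetwork.locus, mem_iUnion, exists_prop] at hyloc
    obtain ⟨f, hf, hyf⟩ := hyloc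
    have hfe : f = e₀ := by
      by_contra hfe
      exact hynotbad (Or.inr (mem_iUnion₂.2 ⟨f, Finset.mem_erase.2 ⟨hfe, hf⟩, hyf⟩))
    subst hfe
    rw [hise] at hyf
    have := seg_split hpe ▸ hyf
    rcases this with h | h
    · exact ⟨h, hyp⟩
    · exact absurd (Or.inl h) hynotbad
  set O : Set Pt := ⋃ x ∈ K, Metric.ball x (Metric.infDist x Sbad) with hO
  have hOopen : IsOpen O := isOpen_biUnion (fun x _ => Metric.isOpen_ball)
  have hKO : K = O ∩ Y := by
    apply Subset.antisymm
    · intro x hxK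
      have hpos : 0 < Metric.infDist x Sbad :=
        (hSclosed.notMem_iff_infDist_pos hSne).1 (hxnotbad x hxK)
      refine ⟨mem_iUnion₂.2 ⟨x, hxK, Metric.mem_ball_self hpos⟩, hsup hxK.1, hxK.2⟩
    · rintro y ⟨hyO, hyY⟩
      obtain ⟨x, hxK, hyb⟩ := mem_iUnion₂.1 hyO
      exact hball x hxK ⟨hyb, hyY⟩
  have huK : u ∈ K := ⟨left_mem_segment ℝ u p, fun h => hpu (mem_singleton_iff.1 h).symm⟩
  -- main case split on whether q lies on [u, p)
  by_cases hqK : q ∈ K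
  · -- q on the half-open segment [u,p): then d(p,q) < d(u,v) ≤ diam
    have hsegpq : segment ℝ p q ⊆ N.locus := by
      intro x hx
      apply hsup
      rw [segment_symm] at hx
      exact (convex_segment u p).segment_subset hqK.1 (right_mem_segment ℝ u p) hx
    have d1 : idist N.locus p q ≤ edist p q := idist_le_edist_of_seg hsegpq
    have d2 : edist u v ≤ idist N.locus u v := edist_le_idist _ _ _
    have d3 : idist N.locus u v ≤ idiam N.locus := by
      rw [idiam]
      refine le_trans ?_ (le_iSup₂_of_le u huloc le_rfl)
      rw [ecc]
      exact le_iSup₂_of_le v hvloc le_rfl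
    have hdistlt : dist p q < dist u v := by
      have e1 := dist_add_dist_of_mem_segment hqK.1
      have e2 := dist_add_dist_of_mem_segment hpe
      have e3 : dist p v ≠ 0 := fun h => hpv (dist_eq_zero.1 h)
      have e4 := dist_comm q p
      have e5 : 0 < dist p v := lt_of_le_of_ne dist_nonneg (Ne.symm e3)
      linarith [dist_nonneg (x := u) (y := q)]
    have hedlt : edist p q < edist u v := by
      rw [edist_dist, edist_dist]
      exact ENNReal.ofReal_lt_ofReal_iff_of_nonneg dist_nonneg |>.2 hdistlt
    have : idiam N.locus < idiam N.locus := by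
      calc idiam N.locus = idist N.locus p q := hdiam.symm
        _ ≤ edist p q := d1
        _ < edist u v := hedlt
        _ ≤ idist N.locus u v := d2
        _ ≤ idiam N.locus := d3
    exact absurd this (lt_irrefl _)
  · -- q off the half-open segment: every path from u to q passes through p
    have hforce : ∀ γ : ℝ → Pt, ContinuousOn γ (Icc 0 1) → γ '' Icc 0 1 ⊆ N.locus →
        γ 0 = u → γ 1 = q → ∃ t ∈ Icc (0:ℝ) 1, γ t = p := by
      intro γ hc hi h0 h1
      by_contra hnp
      push_neg at hnp
      have him : ∀ t ∈ Icc (0:ℝ) 1, γ t ∈ Y :=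
        fun t ht => ⟨hi ⟨t, ht, rfl⟩, fun h => hnp t ht (mem_singleton_iff.1 h)⟩
      exact no_path_clopen hOopen (PlaneNetwork.isClosed_seg u p) hKO hKC hc him
        (h0 ▸ huK) (h1 ▸ hqK)
    have hkey : edist u p + idist N.locus p q ≤ idist N.locus u q :=
      idist_ge_of_forced N.locus u q p hforce
    have hdle : idist N.locus u q ≤ idiam N.locus := by
      rw [idiam]
      refine le_trans ?_ (le_iSup₂_of_le u huloc le_rfl)
      rw [ecc]
      exact le_iSup₂_of_le q hq le_rfl
    -- finiteness of the diameter value d(p,q)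
    have hfin : idist N.locus p q < ⊤ := by
      simp only [PlaneNetwork.locus, mem_iUnion, exists_prop] at hq
      obtain ⟨f, hf, hqf⟩ := hq
      have h1 : idist N.locus p u ≤ edist p u := by
        apply idist_le_edist_of_seg
        rw [segment_symm]
        exact hsup
      have h2 : idist N.locus u f.1 < ⊤ := by
        apply N.idist_lt_top_of_reach huloc
        exact N.reach_of_connected hconn hu.1 (N.ends_mem f hf).1
      have h3 : idist N.locus f.1 q ≤ edist f.1 q := by
        apply idist_le_edist_of_seg
        intro x hx
        apply N.seg_sub_locus hf
        exact (convex_segment f.1 f.2).segment_subset (left_mem_segment ℝ f.1 f.2) hqf hx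
      calc idist N.locus p q ≤ idist N.locus p u + idist N.locus u q := idist_triangle _ _ _ _
        _ ≤ idist N.locus p u + (idist N.locus u f.1 + idist N.locus f.1 q) := by
            gcongr
            exact idist_triangle _ _ _ _
        _ < ⊤ := by
            apply ENNReal.add_lt_top.2
            refine ⟨lt_of_le_of_lt h1 (edist_lt_top p u), ?_⟩
            exact ENNReal.add_lt_top.2 ⟨h2, lt_of_le_of_lt h3 (edist_lt_top f.1 q)⟩
    have hfin' : idiam N.locus < ⊤ := hdiam ▸ hfin
    have hlt : idiam N.locus < edist u p + idiam N.locus := by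
      rw [add_comm]
      apply ENNReal.lt_add_right hfin'.ne
      simp only [ne_eq, edist_eq_zero]
      exact fun h => hpu h.symm
    have : edist u p + idiam N.locus ≤ idiam N.locus := by
      calc edist u p + idiam N.locus = edist u p + idist N.locus p q := by rw [hdiam]
        _ ≤ idist N.locus u q := hkey
        _ ≤ idiam N.locus := hdle
    exact absurd (lt_of_lt_of_le hlt this) (lt_irrefl _)
end
end

section
/- Let 𝒩 be a plane Euclidean network whose locus is not path-connected, with path-connected components 𝒩_ℓ¹, …, 𝒩_ℓᵏ (k ≥ 2). Then there exists a single closed segment s with both endpoints on 𝒩_ℓ such that 𝒩_ℓ ∪ s is path-connected (i.e., scn(𝒩_ℓ) = 1) if and only if there exists a straight line in ℝ² that intersects every convex hull CH(𝒩_ℓⁱ), 1 ≤ i ≤ k. -/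
open Set
open scoped ENNReal

noncomputable section

attribute [local instance] Classical.propDecidable

/-! ### Auxiliary lemmas -/

lemma isCompact_seg (a b : Pt) : IsCompact (segment ℝ a b) := by
  rw [segment_eq_image ℝ a b]
  exact isCompact_Icc.image (by fun_prop)

lemma pt_ext {a b : Pt} (h0 : a 0 = b 0) (h1 : a 1 = b 1) : a = b := by
  apply PiLp.ext; intro j
  fin_cases j <;> assumption

lemma pt_add_smul_apply (x v : Pt) (t : ℝ) (j : Fin 2) :
    (x + t • v) j = x j + t * v j := rfl

lemma line_rep {v x z : Pt} (hv : v ≠ 0)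
    (h : v 1 * (z 0 - x 0) = v 0 * (z 1 - x 1)) : ∃ t : ℝ, z = x + t • v := by
  have hv' : v 0 ≠ 0 ∨ v 1 ≠ 0 := by
    by_contra hc
    push_neg at hc
    exact hv (pt_ext (by simpa using hc.1) (by simpa using hc.2))
  rcases hv' with h0 | h1
  · refine ⟨(z 0 - x 0) / v 0, pt_ext ?_ ?_⟩
    · rw [pt_add_smul_apply]; field_simp; ring
    · rw [pt_add_smul_apply]; field_simp; nlinarith [h]
  · refine ⟨(z 1 - x 1) / v 1, pt_ext ?_ ?_⟩
    · rw [pt_add_smul_apply]; field_simp; nlinarith [h]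
    · rw [pt_add_smul_apply]; field_simp; ring

lemma mem_seg_line (x v : Pt) {m M t : ℝ} (h1 : m ≤ t) (h2 : t ≤ M) :
    x + t • v ∈ segment ℝ (x + m • v) (x + M • v) := by
  rcases eq_or_lt_of_le (h1.trans h2) with h | h
  · have ht : t = m := le_antisymm (h ▸ h2) h1
    rw [ht, ← h]
    exact left_mem_segment ℝ _ _
  · rw [segment_eq_image']
    refine ⟨(t - m) / (M - m), ⟨div_nonneg (by linarith) (by linarith),
      (div_le_one (by linarith)).mpr (by linarith)⟩, ?_⟩
    have hMm : M - m ≠ 0 := ne_of_gt (by linarith)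
    have hsub : (x + M • v) - (x + m • v) = (M - m) • v := by
      rw [sub_smul]; abel
    show x + m • v + ((t - m) / (M - m)) • ((x + M • v) - (x + m • v)) = x + t • v
    rw [hsub, smul_smul, div_mul_cancel₀ _ hMm]
    have : m • v + (t - m) • v = t • v := by rw [← add_smul]; ring_nf
    rw [add_assoc, this]

lemma mem_locus_iff (N : PlaneNetwork) (q : Pt) :
    q ∈ N.locus ↔ ∃ e ∈ N.Edg, q ∈ segment ℝ e.1 e.2 := by
  simp [PlaneNetwork.locus]

lemma locus_closed (N : PlaneNetwork) : IsClosed N.locus := by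
  apply Set.Finite.isClosed_biUnion (N.Edg.finite_toSet)
  intro e _
  exact (isCompact_seg e.1 e.2).isClosed

/-- Local star structure: inside a small ball, every locus point is joined to the center. -/
lemma local_star (N : PlaneNetwork) {p : Pt} (hp : p ∈ N.locus) :
    ∃ r > 0, ∀ q ∈ Metric.ball p r, q ∈ N.locus → JoinedIn N.locus p q := by
  classical
  obtain ⟨r, hr0, hrle⟩ : ∃ r > 0, ∀ e ∈ N.Edg, p ∉ segment ℝ e.1 e.2 →
      r ≤ Metric.infDist p (segment ℝ e.1 e.2) := by
    set E' := N.Edg.filter (fun e => p ∉ segment ℝ e.1 e.2) with hE'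
    rcases E'.eq_empty_or_nonempty with h | h
    · refine ⟨1, one_pos, fun e he hpe => ?_⟩
      exfalso
      have hmem : e ∈ E' := Finset.mem_filter.mpr ⟨he, hpe⟩
      rw [h] at hmem
      exact Finset.notMem_empty e hmem
    · refine ⟨E'.inf' h (fun e => Metric.infDist p (segment ℝ e.1 e.2)), ?_, ?_⟩
      · rw [gt_iff_lt, Finset.lt_inf'_iff]
        intro e he
        have hmem := Finset.mem_filter.mp he
        exact (IsClosed.notMem_iff_infDist_pos (isCompact_seg e.1 e.2).isClosed
          ⟨e.1, left_mem_segment ℝ e.1 e.2⟩).mp hmem.2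
      · intro e he hpe
        exact Finset.inf'_le _ (Finset.mem_filter.mpr ⟨he, hpe⟩)
  refine ⟨r, hr0, fun q hq hqloc => ?_⟩
  obtain ⟨e, he, hqe⟩ := (mem_locus_iff N q).mp hqloc
  have hpe : p ∈ segment ℝ e.1 e.2 := by
    by_contra hpe
    have h1 := hrle e he hpe
    have h2 : Metric.infDist p (segment ℝ e.1 e.2) ≤ dist p q :=
      Metric.infDist_le_dist_of_mem hqe
    have h3 := Metric.mem_ball.mp hq
    rw [dist_comm] at h3
    linarith
  apply JoinedIn.of_segment_subset
  have hsub : segment ℝ p q ⊆ segment ℝ e.1 e.2 :=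
    (convex_segment e.1 e.2).segment_subset hpe hqe
  intro z hz
  exact (mem_locus_iff N z).mpr ⟨e, he, hsub hz⟩

/-- For a plane Euclidean network whose locus is not path-connected, with
path-connected components `C 0, …, C (k-1)` (`k ≥ 2`), there is a single segment with
endpoints on the locus whose insertion makes the locus path-connected iff there is a
straight line stabbing all the convex hulls of the components. -/
theorem stmt12 (N : PlaneNetwork) (hnc : ¬IsPathConnected N.locus)
    (k : ℕ) (hk : 2 ≤ k) (C : Fin k → Set Pt)
    (hcomp : ∀ i, ∃ x ∈ N.locus, C i = pathComponentIn N.locus x)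
    (hinj : Function.Injective C)
    (hcover : ⋃ i, C i = N.locus) :
    (∃ a b : Pt, a ∈ N.locus ∧ b ∈ N.locus ∧
        IsPathConnected (N.locus ∪ segment ℝ a b)) ↔
      ∃ x v : Pt, v ≠ 0 ∧ ∀ i, ∃ t : ℝ, x + t • v ∈ convexHull ℝ (C i) := by
  classical
  choose xc hxc hCeq using hcomp
  have hCsub : ∀ i, C i ⊆ N.locus := fun i => by
    rw [hCeq i]; exact pathComponentIn_subset
  have hCne : ∀ i, xc i ∈ C i := fun i => by
    rw [hCeq i]; exact mem_pathComponentIn_self (hxc i)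
  have hdisj : ∀ i j, i ≠ j → ∀ z, z ∈ C i → z ∈ C j → False := by
    intro i j hij z hzi hzj
    apply hij; apply hinj
    have e1 : pathComponentIn N.locus z = pathComponentIn N.locus (xc i) :=
      pathComponentIn_congr (by rw [← hCeq i]; exact hzi)
    have e2 : pathComponentIn N.locus z = pathComponentIn N.locus (xc j) :=
      pathComponentIn_congr (by rw [← hCeq j]; exact hzj)
    rw [hCeq i, hCeq j, ← e1, ← e2]
  have hopen : ∀ i, ∀ p ∈ C i, ∃ r > 0, Metric.ball p r ∩ N.locus ⊆ C i := by
    intro i p hp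
    obtain ⟨r, hr0, hjoin⟩ := local_star N (hCsub i hp)
    refine ⟨r, hr0, fun q hq => ?_⟩
    have hq' : q ∈ pathComponentIn N.locus p := hjoin q hq.1 hq.2
    have hpc : pathComponentIn N.locus p = pathComponentIn N.locus (xc i) :=
      pathComponentIn_congr (by rw [← hCeq i]; exact hp)
    rw [hCeq i, ← hpc]
    exact hq'
  have hmemC : ∀ q ∈ N.locus, ∃ i, q ∈ C i := fun q hq =>
    mem_iUnion.mp (hcover ▸ hq)
  have hclosed : ∀ i, IsClosed (C i) := by
    intro i
    apply isClosed_of_closure_subset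
    intro p hp
    have hploc : p ∈ N.locus :=
      (locus_closed N).closure_subset ((closure_mono (hCsub i)) hp)
    obtain ⟨j, hj⟩ := hmemC p hploc
    obtain ⟨r, hr0, hsub⟩ := hopen j p hj
    obtain ⟨q, hq1, hq2⟩ := Metric.mem_closure_iff.mp hp r hr0
    have hqb : q ∈ Metric.ball p r := by rwa [Metric.mem_ball, dist_comm]
    have hqj : q ∈ C j := hsub ⟨hqb, hCsub i hq1⟩
    by_cases hij : i = j
    · rw [hij]; exact hj
    · exact (hdisj i j hij q hq1 hqj).elim
  constructor
  · rintro ⟨a, b, ha, hb, hpc⟩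
    have hab : a ≠ b := by
      rintro rfl
      apply hnc
      rwa [segment_same, Set.union_eq_left.mpr (Set.singleton_subset_iff.mpr ha)] at hpc
    have hmeet : ∀ i, ∃ p, p ∈ C i ∧ p ∈ segment ℝ a b := by
      intro i
      by_contra hcon
      push_neg at hcon
      choose! r hr0 hrsub using hopen i
      set s := segment ℝ a b with hs
      have hsne : s.Nonempty := ⟨a, left_mem_segment ℝ a b⟩
      have hscl : IsClosed s := (isCompact_seg a b).isClosed
      have hinf : ∀ p ∈ C i, 0 < Metric.infDist p s := fun p hp =>
        (hscl.notMem_iff_infDist_pos hsne).mp (hcon p hp)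
      set U := ⋃ p ∈ C i, Metric.ball p (min (r p) (Metric.infDist p s)) with hU
      have hUo : IsOpen U := isOpen_biUnion fun p _ => Metric.isOpen_ball
      have hCU : C i ⊆ U := fun p hp =>
        Set.mem_biUnion hp (Metric.mem_ball_self (lt_min (hr0 p hp) (hinf p hp)))
      have hUloc : U ∩ N.locus ⊆ C i := by
        rintro y ⟨hyU, hyl⟩
        obtain ⟨p, hp, hy⟩ := Set.mem_iUnion₂.mp hyU
        exact hrsub p hp ⟨Metric.ball_subset_ball (min_le_left _ _) hy, hyl⟩
      have hUs : ∀ y ∈ U, y ∉ s := by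
        rintro y hyU hys
        obtain ⟨p, hp, hy⟩ := Set.mem_iUnion₂.mp hyU
        have h1 : Metric.infDist p s ≤ dist p y := Metric.infDist_le_dist_of_mem hys
        have h2 : dist y p < min (r p) (Metric.infDist p s) := Metric.mem_ball.mp hy
        rw [dist_comm] at h2
        have h3 := min_le_right (r p) (Metric.infDist p s)
        linarith
      have : Nontrivial (Fin k) := Fin.nontrivial_iff_two_le.mpr hk
      obtain ⟨j, hji⟩ := exists_ne i
      have hpre := hpc.isConnected.isPreconnected
      have hcov : N.locus ∪ s ⊆ U ∪ (C i)ᶜ := by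
        intro z _
        by_cases hzc : z ∈ C i
        · exact Or.inl (hCU hzc)
        · exact Or.inr hzc
      have hne1 : ((N.locus ∪ s) ∩ U).Nonempty :=
        ⟨xc i, Or.inl (hCsub i (hCne i)), hCU (hCne i)⟩
      have hne2 : ((N.locus ∪ s) ∩ (C i)ᶜ).Nonempty :=
        ⟨xc j, Or.inl (hCsub j (hCne j)), fun hzi => hdisj j i hji (xc j) (hCne j) hzi⟩
      obtain ⟨y, hyls, hyU, hyc⟩ := hpre U (C i)ᶜ hUo (hclosed i).isOpen_compl hcov hne1 hne2
      rcases hyls with hyl | hys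
      · exact hyc (hUloc ⟨hyU, hyl⟩)
      · exact hUs y hyU hys
    refine ⟨a, b - a, sub_ne_zero.mpr (Ne.symm hab), fun i => ?_⟩
    obtain ⟨p, hpC, hps⟩ := hmeet i
    rw [segment_eq_image' ℝ a b] at hps
    obtain ⟨t, -, ht⟩ := hps
    refine ⟨t, ?_⟩
    have h2 : p ∈ convexHull ℝ (C i) := subset_convexHull ℝ _ hpC
    rw [← ht] at h2
    exact h2
  · rintro ⟨x, v, hv, hline⟩
    set φ : Pt →L[ℝ] ℝ :=
      v 1 • (EuclideanSpace.proj (0 : Fin 2) : Pt →L[ℝ] ℝ)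
        - v 0 • (EuclideanSpace.proj (1 : Fin 2) : Pt →L[ℝ] ℝ) with hφ
    have hφ_apply : ∀ z : Pt, φ z = v 1 * z 0 - v 0 * z 1 := by
      intro z
      simp [hφ]
    have hφv : φ v = 0 := by rw [hφ_apply]; ring
    have hφline : ∀ t : ℝ, φ (x + t • v) = φ x := by
      intro t
      rw [map_add, map_smul, hφv, smul_zero, add_zero]
    have hmeet : ∀ i, ∃ t : ℝ, x + t • v ∈ C i := by
      intro i
      obtain ⟨t0, ht0⟩ := hline i
      by_contra hcon
      push_neg at hcon
      have hne : ∀ z ∈ C i, φ z ≠ φ x := by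
        intro z hz hEq
        rw [hφ_apply, hφ_apply] at hEq
        obtain ⟨t, ht⟩ := line_rep (v := v) (x := x) (z := z) hv (by linarith)
        exact hcon t (by rw [← ht]; exact hz)
      have hPC : IsPreconnected (C i) := by
        rw [hCeq i]
        exact (isPathConnected_pathComponentIn (hxc i)).isConnected.isPreconnected
      have hlinφ : IsLinearMap ℝ (φ : Pt → ℝ) := ⟨φ.map_add, φ.map_smul⟩
      by_cases hlt : ∀ z ∈ C i, φ z < φ x
      · have hhull : convexHull ℝ (C i) ⊆ {w | φ w < φ x} :=
          convexHull_min hlt (convex_halfSpace_lt hlinφ (φ x))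
        have h2 := hhull ht0
        rw [Set.mem_setOf_eq, hφline t0] at h2
        exact lt_irrefl _ h2
      · by_cases hgt : ∀ z ∈ C i, φ x < φ z
        · have hhull : convexHull ℝ (C i) ⊆ {w | φ x < φ w} :=
            convexHull_min hgt (convex_halfSpace_gt hlinφ (φ x))
          have h2 := hhull ht0
          rw [Set.mem_setOf_eq, hφline t0] at h2
          exact lt_irrefl _ h2
        · push_neg at hlt hgt
          obtain ⟨z1, hz1C, hz1⟩ := hlt
          obtain ⟨z2, hz2C, hz2⟩ := hgt
          have himg : IsPreconnected (φ '' C i) :=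
            hPC.image φ φ.continuous.continuousOn
          have hx_mem : φ x ∈ φ '' C i :=
            himg.Icc_subset ⟨z2, hz2C, rfl⟩ ⟨z1, hz1C, rfl⟩ ⟨hz2, hz1⟩
          obtain ⟨z, hzC, hzφ⟩ := hx_mem
          exact hne z hzC hzφ
    choose t ht using hmeet
    have hune : (Finset.univ : Finset (Fin k)).Nonempty := ⟨⟨0, by omega⟩, Finset.mem_univ _⟩
    obtain ⟨i0, -, hi0⟩ := Finset.exists_mem_eq_inf' hune t
    obtain ⟨i1, -, hi1⟩ := Finset.exists_mem_eq_sup' hune t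
    refine ⟨x + (Finset.univ.inf' hune t) • v, x + (Finset.univ.sup' hune t) • v, ?_, ?_, ?_⟩
    · rw [hi0]; exact hCsub i0 (ht i0)
    · rw [hi1]; exact hCsub i1 (ht i1)
    have hseg : ∀ i, x + t i • v ∈ segment ℝ (x + (Finset.univ.inf' hune t) • v)
        (x + (Finset.univ.sup' hune t) • v) := fun i =>
      mem_seg_line x v (Finset.inf'_le t (Finset.mem_univ i))
        (Finset.le_sup' t (Finset.mem_univ i))
    set a := x + (Finset.univ.inf' hune t) • v
    set b := x + (Finset.univ.sup' hune t) • v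
    have hSpc : IsPathConnected (segment ℝ a b) :=
      (convex_segment a b).isPathConnected ⟨a, left_mem_segment ℝ a b⟩
    refine ⟨a, Or.inr (left_mem_segment ℝ a b), ?_⟩
    intro y hy
    rcases hy with hyl | hys
    · obtain ⟨i, hi⟩ := hmemC y hyl
      have hCpc : IsPathConnected (C i) := by
        rw [hCeq i]
        exact isPathConnected_pathComponentIn (hxc i)
      have j1 : JoinedIn (C i) y (x + t i • v) := hCpc.joinedIn y hi _ (ht i)
      have j2 : JoinedIn (segment ℝ a b) (x + t i • v) a :=
        hSpc.joinedIn _ (hseg i) a (left_mem_segment ℝ a b)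
      exact ((j2.symm.mono Set.subset_union_right).trans
        (j1.symm.mono ((hCsub i).trans Set.subset_union_left)))
    · exact (hSpc.joinedIn a (left_mem_segment ℝ a b) y hys).mono Set.subset_union_right
end
end

section
/- Let u₁, u₂, u₃ ∈ ℝ² be affinely independent points and let u₄ lie in the interior of the triangle T with vertices u₁, u₂, u₃. Let (K₄)_ℓ be the union of the six closed segments u_iu_j, 1 ≤ i < j ≤ 4. Then diam((K₄)_ℓ) > per(T)/2, where per(T) = ‖u₁−u₂‖ + ‖u₂−u₃‖ + ‖u₃−u₁‖ is the perimeter of T. -/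
open Set
open scoped ENNReal

noncomputable section

attribute [local instance] Classical.propDecidable

/-- The locus of a plane embedding of `K₄`: the union of the six closed segments
joining the four points. -/
def K4locus (u₁ u₂ u₃ u₄ : Pt) : Set Pt :=
  segment ℝ u₁ u₂ ∪ segment ℝ u₁ u₃ ∪ segment ℝ u₁ u₄ ∪
    segment ℝ u₂ u₃ ∪ segment ℝ u₂ u₄ ∪ segment ℝ u₃ u₄

open Filter Topology in
lemma exit_lemma {γ : ℝ → Pt} {a b : ℝ} {S U : Set Pt} (hab : a ≤ b)
    (hγ : ContinuousOn γ (Set.Icc a b)) (hU : IsOpen U)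
    (hiff : ∀ t ∈ Set.Icc a b, (γ t ∈ S ↔ γ t ∈ U))
    (ha : γ a ∈ S) (hb : γ b ∉ S) :
    ∃ t ∈ Set.Icc a b, γ t ∈ closure S ∧ γ t ∉ S := by
  set A := {t | t ∈ Set.Icc a b ∧ γ t ∉ S} with hA
  have hbA : b ∈ A := ⟨right_mem_Icc.2 hab, hb⟩
  have hAne : A.Nonempty := ⟨b, hbA⟩
  have hbdd : BddBelow A := ⟨a, fun t ht => ht.1.1⟩
  set t₁ := sInf A with ht₁
  have ht₁b : t₁ ≤ b := csInf_le hbdd hbA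
  have hat₁ : a ≤ t₁ := le_csInf hAne fun t ht => ht.1.1
  have ht₁Icc : t₁ ∈ Set.Icc a b := ⟨hat₁, ht₁b⟩
  have hbefore : ∀ t, a ≤ t → t < t₁ → γ t ∈ S := by
    intro t h1 h2
    by_contra h
    exact absurd (csInf_le hbdd ⟨⟨h1, h2.le.trans ht₁b⟩, h⟩) (not_le.2 h2)
  have hnot : γ t₁ ∉ S := by
    intro hS
    have hUmem : U ∈ 𝓝 (γ t₁) := hU.mem_nhds ((hiff t₁ ht₁Icc).1 hS)
    have hpre := hγ t₁ ht₁Icc hUmem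
    rw [mem_map, Metric.mem_nhdsWithin_iff] at hpre
    obtain ⟨ε, hε, hball⟩ := hpre
    obtain ⟨x, hxA, hx⟩ := (csInf_lt_iff hbdd hAne).1
      (show sInf A < t₁ + ε by rw [← ht₁]; linarith)
    have hx1 : t₁ ≤ x := csInf_le hbdd hxA
    have : γ x ∈ U := hball ⟨by
      simp only [Metric.mem_ball, Real.dist_eq]
      rw [abs_lt]; constructor <;> linarith, hxA.1⟩
    exact hxA.2 ((hiff x hxA.1).2 this)
  refine ⟨t₁, ht₁Icc, ?_, hnot⟩
  rcases eq_or_lt_of_le hat₁ with h | h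
  · rw [← h]; exact subset_closure ha
  · have hcw : ContinuousWithinAt γ (Set.Icc a b) t₁ := hγ t₁ ht₁Icc
    have htend : Filter.Tendsto γ (𝓝[Set.Ico a t₁] t₁) (𝓝 (γ t₁)) :=
      hcw.mono fun x hx => ⟨hx.1, hx.2.le.trans ht₁b⟩
    have hne : (𝓝[Set.Ico a t₁] t₁).NeBot := right_nhdsWithin_Ico_neBot h
    exact mem_closure_of_tendsto htend
      (eventually_mem_nhdsWithin.mono fun x hx => hbefore x hx.1 hx.2)

lemma seg_closed (P Q : Pt) : IsClosed (segment ℝ P Q) := by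
  rw [segment_eq_image_lineMap]
  exact (isCompact_Icc.image (AffineMap.lineMap_continuous)).isClosed

lemma mem_seg {P Q x : Pt} (hx : x ∈ segment ℝ P Q) :
    ∃ t : ℝ, 0 ≤ t ∧ t ≤ 1 ∧ x = AffineMap.lineMap P Q t := by
  rw [segment_eq_image_lineMap] at hx
  obtain ⟨t, ht, h⟩ := hx
  exact ⟨t, ht.1, ht.2, h.symm⟩

lemma mem_openSeg {P Q x : Pt} (hx : x ∈ openSegment ℝ P Q) :
    ∃ t : ℝ, 0 < t ∧ t < 1 ∧ x = AffineMap.lineMap P Q t := by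
  rw [openSegment_eq_image_lineMap] at hx
  obtain ⟨t, ht, h⟩ := hx
  exact ⟨t, ht.1, ht.2, h.symm⟩


set_option maxHeartbeats 8000000 in
/-- The intrinsic diameter of the locus of a plane embedding of `K₄`
strictly exceeds half the perimeter of the outer triangle. -/
theorem stmt17 (u₁ u₂ u₃ u₄ : Pt)
    (hindep : AffineIndependent ℝ ![u₁, u₂, u₃])
    (hint : u₄ ∈ interior (convexHull ℝ ({u₁, u₂, u₃} : Set Pt))) :
    ENNReal.ofReal ((‖u₁ - u₂‖ + ‖u₂ - u₃‖ + ‖u₃ - u₁‖) / 2) <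
      idiam (K4locus u₁ u₂ u₃ u₄) := by

  classical
  -- barycentric coordinates
  have hspan : affineSpan ℝ (Set.range ![u₁, u₂, u₃]) = ⊤ := by
    rw [hindep.affineSpan_eq_top_iff_card_eq_finrank_add_one]
    simp [finrank_euclideanSpace]
  set B : AffineBasis (Fin 3) ℝ Pt := ⟨![u₁, u₂, u₃], hindep, hspan⟩ with hBdef
  have hBfun : ⇑B = ![u₁, u₂, u₃] := rfl
  have hrange : (Set.range ⇑B : Set Pt) = {u₁, u₂, u₃} := by
    rw [hBfun]; ext x
    simp [Fin.exists_fin_succ, eq_comm]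
    tauto
  have hpos : ∀ i, 0 < B.coord i u₄ := by
    have h2 := B.interior_convexHull
    rw [hrange] at h2
    rw [h2] at hint
    exact hint
  have hc : ∀ i j, B.coord i (![u₁, u₂, u₃] j) = if i = j then 1 else 0 := by
    intro i j
    have := B.coord_apply i j
    rwa [hBfun] at this
  have hc00 : B.coord 0 u₁ = 1 := by simpa using hc 0 0
  have hc01 : B.coord 0 u₂ = 0 := by simpa using hc 0 1
  have hc02 : B.coord 0 u₃ = 0 := by simpa using hc 0 2
  have hc10 : B.coord 1 u₁ = 0 := by simpa using hc 1 0
  have hc11 : B.coord 1 u₂ = 1 := by simpa using hc 1 1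
  have hc12 : B.coord 1 u₃ = 0 := by simpa using hc 1 2
  have hc20 : B.coord 2 u₁ = 0 := by simpa using hc 2 0
  have hc21 : B.coord 2 u₂ = 0 := by simpa using hc 2 1
  have hc22 : B.coord 2 u₃ = 1 := by simpa using hc 2 2
  have hline : ∀ (P Q : Pt) (t : ℝ) (i : Fin 3),
      B.coord i (AffineMap.lineMap P Q t) = (1 - t) * B.coord i P + t * B.coord i Q := by
    intro P Q t i
    rw [AffineMap.apply_lineMap, AffineMap.lineMap_apply_module]
    simp only [smul_eq_mul]
  set c₁ := B.coord 0 u₄ with hc₁def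
  set c₂ := B.coord 1 u₄ with hc₂def
  set c₃ := B.coord 2 u₄ with hc₃def
  have hc₁ : 0 < c₁ := hpos 0
  have hc₂ : 0 < c₂ := hpos 1
  have hc₃ : 0 < c₃ := hpos 2
  -- coordinates on segments
  have hseg12 : ∀ x ∈ segment ℝ u₁ u₂, B.coord 2 x = 0 := by
    intro x hx
    obtain ⟨t, _, _, rfl⟩ := mem_seg hx
    rw [hline, hc20, hc21]; ring
  have hseg13 : ∀ x ∈ segment ℝ u₁ u₃, B.coord 1 x = 0 := by
    intro x hx
    obtain ⟨t, _, _, rfl⟩ := mem_seg hx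
    rw [hline, hc10, hc12]; ring
  have hseg23 : ∀ x ∈ segment ℝ u₂ u₃, B.coord 0 x = 0 := by
    intro x hx
    obtain ⟨t, _, _, rfl⟩ := mem_seg hx
    rw [hline, hc01, hc02]; ring

  -- basic non-membership facts
  have n4 : u₃ ∉ segment ℝ u₁ u₂ := fun h => by
    have := hseg12 u₃ h; rw [hc22] at this; norm_num at this
  have n3 : u₄ ∉ segment ℝ u₁ u₂ := fun h => by
    have := hseg12 u₄ h; exact absurd this (ne_of_gt hc₃)
  have n1 : u₄ ∉ segment ℝ u₂ u₃ := fun h => by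
    have := hseg23 u₄ h; exact absurd this (ne_of_gt hc₁)
  have n2 : u₄ ∉ segment ℝ u₃ u₁ := fun h => by
    rw [segment_symm] at h
    have := hseg13 u₄ h; exact absurd this (ne_of_gt hc₂)
  have n5 : u₁ ∉ segment ℝ u₂ u₃ := fun h => by
    have := hseg23 u₁ h; rw [hc00] at this; norm_num at this
  have n6 : u₂ ∉ segment ℝ u₃ u₁ := fun h => by
    rw [segment_symm] at h
    have := hseg13 u₂ h; rw [hc11] at this; norm_num at this
  -- strict triangle inequality
  have strict : ∀ x y z : Pt, y ∉ segment ℝ x z → dist x z < dist x y + dist y z := by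
    intro x y z hy
    refine (dist_triangle x y z).lt_of_ne' fun h => hy ?_
    rw [mem_segment_iff_wbtw]
    exact dist_add_dist_eq_iff.1 h
  -- distance abbreviations
  set a := dist u₂ u₃ with hadef
  set bb := dist u₃ u₁ with hbbdef
  set c := dist u₁ u₂ with hcdef
  set d₁ := dist u₁ u₄ with hd₁def
  set d₂ := dist u₂ u₄ with hd₂def
  set d₃ := dist u₃ u₄ with hd₃def
  have hne12 : u₁ ≠ u₂ := fun h => by rw [h, hc01] at hc00; norm_num at hc00
  have hne34 : u₃ ≠ u₄ := fun h => by
    have h0 := hpos 0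
    rw [← h, hc02] at h0; norm_num at h0
  have hc0 : 0 < c := dist_pos.2 hne12
  have hd₃0 : 0 < d₃ := dist_pos.2 hne34
  have hA : a < d₂ + d₃ := by
    have h := strict u₂ u₄ u₃ n1
    rw [dist_comm u₄ u₃] at h
    linarith [hadef, hd₂def, hd₃def]
  have hB : bb < d₁ + d₃ := by
    have h := strict u₃ u₄ u₁ n2
    rw [dist_comm u₄ u₁] at h
    linarith [hbbdef, hd₁def, hd₃def]
  have htri1 : a < bb + c := by
    have h := strict u₂ u₁ u₃ n5
    rw [dist_comm u₂ u₁, dist_comm u₁ u₃] at h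
    linarith [hadef, hbbdef, hcdef]
  have htri2 : bb < a + c := by
    have h := strict u₃ u₂ u₁ n6
    rw [dist_comm u₃ u₂, dist_comm u₂ u₁] at h
    linarith [hbbdef, hadef, hcdef]
  have htri3 : d₂ ≤ c + d₁ := by
    have h := dist_triangle u₂ u₁ u₄
    rw [dist_comm u₂ u₁] at h
    linarith [hd₂def, hcdef, hd₁def]
  have htri4 : d₁ ≤ c + d₂ := by
    have h := dist_triangle u₁ u₂ u₄
    linarith [hd₁def, hcdef, hd₂def]

  -- numeric choices
  set s := (c + a + bb) / 2 with hsdef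
  set θ := (1 + max 0 ((a + bb - d₁ - d₂) / (2 * d₃))) / 2 with hθdef
  have hmax01 : max 0 ((a + bb - d₁ - d₂) / (2 * d₃)) < 1 := by
    rw [max_lt_iff]
    constructor
    · norm_num
    · rw [div_lt_one (by linarith : (0:ℝ) < 2 * d₃)]
      linarith
  have hθ0 : 0 < θ := by
    have := le_max_left 0 ((a + bb - d₁ - d₂) / (2 * d₃))
    rw [hθdef]; linarith
  have hθ1 : θ < 1 := by rw [hθdef]; linarith
  have hkey : a + bb - d₁ - d₂ < 2 * (θ * d₃) := by
    rcases le_or_gt (a + bb - d₁ - d₂) 0 with h | h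
    · have h2θ : 1 / 2 ≤ θ := by
        have := le_max_left 0 ((a + bb - d₁ - d₂) / (2 * d₃))
        rw [hθdef]; linarith
      have h3 : (1 / 2 : ℝ) * d₃ ≤ θ * d₃ := by
        apply mul_le_mul_of_nonneg_right h2θ hd₃0.le
      linarith
    · have hXpos : 0 < (a + bb - d₁ - d₂) / (2 * d₃) := div_pos h (by linarith)
      have hM : max 0 ((a + bb - d₁ - d₂) / (2 * d₃)) = (a + bb - d₁ - d₂) / (2 * d₃) :=
        max_eq_right hXpos.le
      have hXd : (a + bb - d₁ - d₂) / (2 * d₃) * d₃ = (a + bb - d₁ - d₂) / 2 := by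
        field_simp
      have hθval : θ * d₃ = (1 + (a + bb - d₁ - d₂) / (2 * d₃)) / 2 * d₃ := by
        rw [hθdef, hM]
      have : (1 + (a + bb - d₁ - d₂) / (2 * d₃)) / 2 * d₃
          = d₃ / 2 + (a + bb - d₁ - d₂) / 4 := by
        field_simp; ring
      rw [this] at hθval
      linarith
  set L := max (s - bb - (1 - θ) * d₃) (s - d₁ - θ * d₃) with hLdef
  set R := max (s - a - (1 - θ) * d₃) (s - d₂ - θ * d₃) with hRdef
  have h1θ : 0 < (1 - θ) * d₃ := mul_pos (by linarith) hd₃0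
  have hθd : 0 < θ * d₃ := mul_pos hθ0 hd₃0
  have hLc : L = (s - bb - (1 - θ) * d₃) ∨ L = (s - d₁ - θ * d₃) := by
    rw [hLdef]; exact max_choice _ _
  have hRc : R = (s - a - (1 - θ) * d₃) ∨ R = (s - d₂ - θ * d₃) := by
    rw [hRdef]; exact max_choice _ _
  have hsplit : (1 - θ) * d₃ + θ * d₃ = d₃ := by ring
  have hLR : L < c - R := by
    rcases hLc with h | h <;> rcases hRc with h' | h' <;> rw [h, h'] <;>
      linarith only [hsdef, hsplit, h1θ, hθd, hA, hB, hkey]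
  have hLltc : L < c := by
    rcases hLc with h | h <;> rw [h] <;>
      linarith only [hsdef, hsplit, h1θ, hθd, hkey, htri1, htri3]
  have hRltc : 0 < c - R := by
    rcases hRc with h | h <;> rw [h] <;>
      linarith only [hsdef, hsplit, h1θ, hθd, hkey, htri2, htri4]
  set w := (max L 0 + min (c - R) c) / 2 with hwdef
  have hwin : max L 0 < min (c - R) c := by
    exact lt_min (max_lt hLR hRltc) (max_lt hLltc hc0)
  have hwL : L < w := by
    have h1 := le_max_left L 0
    rw [hwdef]; linarith only [h1, hwin]
  have hw0 : 0 < w := by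
    have h1 := le_max_right L 0
    rw [hwdef]; linarith only [h1, hwin]
  have hwR : w < c - R := by
    have h1 := min_le_left (c - R) c
    rw [hwdef]; linarith only [h1, hwin]
  have hwc : w < c := by
    have h1 := min_le_right (c - R) c
    rw [hwdef]; linarith only [h1, hwin]
  -- the four route lengths exceed s
  have hLa : s - bb - (1 - θ) * d₃ ≤ L := by rw [hLdef]; exact le_max_left _ _
  have hLb : s - d₁ - θ * d₃ ≤ L := by rw [hLdef]; exact le_max_right _ _
  have hRa : s - a - (1 - θ) * d₃ ≤ R := by rw [hRdef]; exact le_max_left _ _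
  have hRb : s - d₂ - θ * d₃ ≤ R := by rw [hRdef]; exact le_max_right _ _
  have hR1 : s < (1 - θ) * d₃ + bb + w := by linarith only [hwL, hLa]
  have hR2 : s < (1 - θ) * d₃ + a + (c - w) := by linarith only [hwR, hRa]
  have hR3 : s < θ * d₃ + d₁ + w := by linarith only [hwL, hLb]
  have hR4 : s < θ * d₃ + d₂ + (c - w) := by linarith only [hwR, hRb]

  -- the special points p and q
  set μ := w / c with hμdef
  have hμ0 : 0 < μ := div_pos hw0 hc0
  have hμ1 : μ < 1 := (div_lt_one hc0).2 hwc
  have hμc : μ * c = w := by rw [hμdef]; field_simp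
  set p : Pt := AffineMap.lineMap u₃ u₄ (1 - θ) with hpdef
  set q : Pt := AffineMap.lineMap u₁ u₂ μ with hqdef
  have hp3 : dist p u₃ = (1 - θ) * d₃ := by
    rw [hpdef, dist_lineMap_left, Real.norm_eq_abs, abs_of_pos (by linarith)]
  have hp4 : dist p u₄ = θ * d₃ := by
    rw [hpdef, dist_lineMap_right, Real.norm_eq_abs]
    rw [show (1 : ℝ) - (1 - θ) = θ by ring, abs_of_pos hθ0]
  have hq1 : dist q u₁ = w := by
    rw [hqdef, dist_lineMap_left, Real.norm_eq_abs, abs_of_pos hμ0, ← hcdef, hμc]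
  have hq2 : dist q u₂ = c - w := by
    rw [hqdef, dist_lineMap_right, Real.norm_eq_abs, abs_of_pos (by linarith), ← hcdef]
    rw [sub_mul, one_mul, hμc]
  have hpseg : p ∈ segment ℝ u₃ u₄ := by
    rw [segment_eq_image_lineMap]
    exact ⟨1 - θ, ⟨by linarith, by linarith⟩, rfl⟩
  have hpopen : p ∈ openSegment ℝ u₃ u₄ := by
    rw [openSegment_eq_image_lineMap]
    exact ⟨1 - θ, ⟨by linarith, by linarith⟩, rfl⟩
  have hqseg : q ∈ segment ℝ u₁ u₂ := by
    rw [segment_eq_image_lineMap]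
    exact ⟨μ, ⟨by linarith, by linarith⟩, rfl⟩
  have hqopen : q ∈ openSegment ℝ u₁ u₂ := by
    rw [openSegment_eq_image_lineMap]
    exact ⟨μ, ⟨hμ0, hμ1⟩, rfl⟩
  -- the locus
  set X := K4locus u₁ u₂ u₃ u₄ with hXdef
  have hXcases : ∀ x ∈ X, x ∈ segment ℝ u₁ u₂ ∨ x ∈ segment ℝ u₁ u₃ ∨ x ∈ segment ℝ u₁ u₄ ∨
      x ∈ segment ℝ u₂ u₃ ∨ x ∈ segment ℝ u₂ u₄ ∨ x ∈ segment ℝ u₃ u₄ := by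
    intro x hx
    rw [hXdef] at hx
    simp only [K4locus, Set.mem_union] at hx
    rcases hx with ((((h | h) | h) | h) | h) | h
    exacts [Or.inl h, Or.inr (Or.inl h), Or.inr (Or.inr (Or.inl h)),
      Or.inr (Or.inr (Or.inr (Or.inl h))), Or.inr (Or.inr (Or.inr (Or.inr (Or.inl h)))),
      Or.inr (Or.inr (Or.inr (Or.inr (Or.inr h))))]
  have hpX : p ∈ X := by
    rw [hXdef]; simp only [K4locus, Set.mem_union]
    exact Or.inr hpseg
  have hqX : q ∈ X := by
    rw [hXdef]; simp only [K4locus, Set.mem_union]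
    exact Or.inl (Or.inl (Or.inl (Or.inl (Or.inl hqseg))))
  -- characterization of the open spoke u₃u₄
  have hopen34 : ∀ x ∈ openSegment ℝ u₃ u₄, x ∉ segment ℝ u₁ u₂ ∧ x ∉ segment ℝ u₁ u₃ ∧
      x ∉ segment ℝ u₁ u₄ ∧ x ∉ segment ℝ u₂ u₃ ∧ x ∉ segment ℝ u₂ u₄ ∧ x ≠ u₃ ∧ x ≠ u₄ := by
    intro x hx
    obtain ⟨t, ht0, ht1, rfl⟩ := mem_openSeg hx
    have hx0 : B.coord 0 (AffineMap.lineMap u₃ u₄ t) = t * c₁ := by rw [hline, hc02]; ring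
    have hx1 : B.coord 1 (AffineMap.lineMap u₃ u₄ t) = t * c₂ := by rw [hline, hc12]; ring
    have hx2 : B.coord 2 (AffineMap.lineMap u₃ u₄ t) = (1 - t) + t * c₃ := by
      rw [hline, hc22]; ring
    have htc₁ : 0 < t * c₁ := mul_pos ht0 hc₁
    have htc₂ : 0 < t * c₂ := mul_pos ht0 hc₂
    have htc₃ : 0 < t * c₃ := mul_pos ht0 hc₃
    refine ⟨?_, ?_, ?_, ?_, ?_, ?_, ?_⟩
    · intro h; have := hseg12 _ h; rw [hx2] at this; linarith only [this, htc₃, ht1]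
    · intro h; have := hseg13 _ h; rw [hx1] at this; linarith only [this, htc₂]
    · intro h
      obtain ⟨r, hr0, hr1, hx⟩ := mem_seg h
      have e1 : B.coord 1 (AffineMap.lineMap u₁ u₄ r) = r * c₂ := by rw [hline, hc10]; ring
      have e0 : B.coord 0 (AffineMap.lineMap u₁ u₄ r) = (1 - r) + r * c₁ := by
        rw [hline, hc00]; ring
      rw [hx] at hx1 hx0
      rw [e1] at hx1
      rw [e0] at hx0
      have hrt : r = t := mul_right_cancel₀ (ne_of_gt hc₂) hx1
      rw [hrt] at hx0
      linarith only [hx0, ht1]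
    · intro h; have := hseg23 _ h; rw [hx0] at this; linarith only [this, htc₁]
    · intro h
      obtain ⟨r, hr0, hr1, hx⟩ := mem_seg h
      have e0 : B.coord 0 (AffineMap.lineMap u₂ u₄ r) = r * c₁ := by rw [hline, hc01]; ring
      have e1 : B.coord 1 (AffineMap.lineMap u₂ u₄ r) = (1 - r) + r * c₂ := by
        rw [hline, hc11]; ring
      rw [hx] at hx1 hx0
      rw [e0] at hx0
      rw [e1] at hx1
      have hrt : r = t := mul_right_cancel₀ (ne_of_gt hc₁) hx0
      rw [hrt] at hx1
      linarith only [hx1, ht1]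
    · intro h; rw [h] at hx0; rw [hc02] at hx0; linarith only [hx0, htc₁]
    · intro h; rw [h] at hx0
      have h2 : c₁ = t * c₁ := by rw [hc₁def]; exact hx0
      nlinarith only [h2, mul_pos (sub_pos.2 ht1) hc₁]
  -- characterization of the open side u₁u₂
  have hopen12 : ∀ x ∈ openSegment ℝ u₁ u₂, x ∉ segment ℝ u₁ u₃ ∧ x ∉ segment ℝ u₁ u₄ ∧
      x ∉ segment ℝ u₂ u₃ ∧ x ∉ segment ℝ u₂ u₄ ∧ x ∉ segment ℝ u₃ u₄ ∧ x ≠ u₁ ∧ x ≠ u₂ := by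
    intro x hx
    obtain ⟨t, ht0, ht1, rfl⟩ := mem_openSeg hx
    have hx0 : B.coord 0 (AffineMap.lineMap u₁ u₂ t) = 1 - t := by rw [hline, hc00, hc01]; ring
    have hx1 : B.coord 1 (AffineMap.lineMap u₁ u₂ t) = t := by rw [hline, hc10, hc11]; ring
    have hx2 : B.coord 2 (AffineMap.lineMap u₁ u₂ t) = 0 := by rw [hline, hc20, hc21]; ring
    refine ⟨?_, ?_, ?_, ?_, ?_, ?_, ?_⟩
    · intro h; have := hseg13 _ h; rw [hx1] at this; linarith only [this, ht0]
    · intro h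
      obtain ⟨r, hr0, hr1, hx⟩ := mem_seg h
      have e2 : B.coord 2 (AffineMap.lineMap u₁ u₄ r) = r * c₃ := by rw [hline, hc20]; ring
      have e1 : B.coord 1 (AffineMap.lineMap u₁ u₄ r) = r * c₂ := by rw [hline, hc10]; ring
      rw [hx] at hx2 hx1
      rw [e2] at hx2
      rw [e1] at hx1
      have hr : r = 0 := by
        rcases mul_eq_zero.1 hx2 with h' | h'
        · exact h'
        · exact absurd h' (ne_of_gt hc₃)
      rw [hr] at hx1; simp at hx1; linarith only [hx1, ht0]
    · intro h; have := hseg23 _ h; rw [hx0] at this; linarith only [this, ht1]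
    · intro h
      obtain ⟨r, hr0, hr1, hx⟩ := mem_seg h
      have e2 : B.coord 2 (AffineMap.lineMap u₂ u₄ r) = r * c₃ := by rw [hline, hc21]; ring
      have e0 : B.coord 0 (AffineMap.lineMap u₂ u₄ r) = r * c₁ := by rw [hline, hc01]; ring
      rw [hx] at hx2 hx0
      rw [e2] at hx2
      rw [e0] at hx0
      have hr : r = 0 := by
        rcases mul_eq_zero.1 hx2 with h' | h'
        · exact h'
        · exact absurd h' (ne_of_gt hc₃)
      rw [hr] at hx0; simp at hx0; linarith only [hx0, ht1]
    · intro h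
      obtain ⟨r, hr0, hr1, hx⟩ := mem_seg h
      have e2 : B.coord 2 (AffineMap.lineMap u₃ u₄ r) = (1 - r) + r * c₃ := by
        rw [hline, hc22]; ring
      rw [hx] at hx2
      rw [e2] at hx2
      nlinarith only [hx2, hr1, hr0, hc₃, mul_nonneg hr0 hc₃.le]
    · intro h; rw [h, hc10] at hx1; linarith only [hx1, ht0]
    · intro h; rw [h, hc01] at hx0; linarith only [hx0, ht1]
  -- the open sets witnessing relative openness
  set U34 : Set Pt := (segment ℝ u₁ u₂ ∪ segment ℝ u₁ u₃ ∪ segment ℝ u₁ u₄ ∪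
      segment ℝ u₂ u₃ ∪ segment ℝ u₂ u₄ ∪ {u₃, u₄})ᶜ with hU34def
  have hU34open : IsOpen U34 := by
    rw [hU34def, isOpen_compl_iff]
    refine (((((seg_closed u₁ u₂).union (seg_closed u₁ u₃)).union (seg_closed u₁ u₄)).union
      (seg_closed u₂ u₃)).union (seg_closed u₂ u₄)).union ?_
    exact ((Set.finite_singleton u₄).insert u₃).isClosed
  set U12 : Set Pt := (segment ℝ u₁ u₃ ∪ segment ℝ u₁ u₄ ∪ segment ℝ u₂ u₃ ∪
      segment ℝ u₂ u₄ ∪ segment ℝ u₃ u₄ ∪ {u₁, u₂})ᶜ with hU12def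
  have hU12open : IsOpen U12 := by
    rw [hU12def, isOpen_compl_iff]
    refine (((((seg_closed u₁ u₃).union (seg_closed u₁ u₄)).union (seg_closed u₂ u₃)).union
      (seg_closed u₂ u₄)).union (seg_closed u₃ u₄)).union ?_
    exact ((Set.finite_singleton u₂).insert u₁).isClosed
  have hiff34 : ∀ x ∈ X, (x ∈ openSegment ℝ u₃ u₄ ↔ x ∈ U34) := by
    intro x hxX
    rw [hU34def]
    simp only [Set.mem_compl_iff, Set.mem_union, Set.mem_insert_iff, Set.mem_singleton_iff]
    constructor
    · intro h
      obtain ⟨e1, e2, e3, e4, e5, e6, e7⟩ := hopen34 x h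
      tauto
    · intro h
      push_neg at h
      obtain ⟨⟨⟨⟨⟨g1, g2⟩, g3⟩, g4⟩, g5⟩, g6, g7⟩ := h
      have hx34 : x ∈ segment ℝ u₃ u₄ := by
        rcases hXcases x hxX with h' | h' | h' | h' | h' | h' <;> tauto
      rw [← insert_endpoints_openSegment] at hx34
      simp only [Set.mem_insert_iff] at hx34
      tauto
  have hiff12 : ∀ x ∈ X, (x ∈ openSegment ℝ u₁ u₂ ↔ x ∈ U12) := by
    intro x hxX
    rw [hU12def]
    simp only [Set.mem_compl_iff, Set.mem_union, Set.mem_insert_iff, Set.mem_singleton_iff]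
    constructor
    · intro h
      obtain ⟨e1, e2, e3, e4, e5, e6, e7⟩ := hopen12 x h
      tauto
    · intro h
      push_neg at h
      obtain ⟨⟨⟨⟨⟨g1, g2⟩, g3⟩, g4⟩, g5⟩, g6, g7⟩ := h
      have hx12 : x ∈ segment ℝ u₁ u₂ := by
        rcases hXcases x hxX with h' | h' | h' | h' | h' | h' <;> tauto
      rw [← insert_endpoints_openSegment] at hx12
      simp only [Set.mem_insert_iff] at hx12
      tauto
  have hq_not34 : q ∉ openSegment ℝ u₃ u₄ := fun h => (hopen34 q h).1 hqseg
  have hu₃_not12 : u₃ ∉ openSegment ℝ u₁ u₂ := fun h => n4 (openSegment_subset_segment ℝ u₁ u₂ h)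
  have hu₄_not12 : u₄ ∉ openSegment ℝ u₁ u₂ := fun h => n3 (openSegment_subset_segment ℝ u₁ u₂ h)
  -- the uniform lower bound
  set m := min (min ((1 - θ) * d₃ + bb + w) ((1 - θ) * d₃ + a + (c - w)))
      (min (θ * d₃ + d₁ + w) (θ * d₃ + d₂ + (c - w))) with hmdef
  have hm1 : m ≤ (1 - θ) * d₃ + bb + w := by
    rw [hmdef]; exact (min_le_left _ _).trans (min_le_left _ _)
  have hm2 : m ≤ (1 - θ) * d₃ + a + (c - w) := by
    rw [hmdef]; exact (min_le_left _ _).trans (min_le_right _ _)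
  have hm3 : m ≤ θ * d₃ + d₁ + w := by
    rw [hmdef]; exact (min_le_right _ _).trans (min_le_left _ _)
  have hm4 : m ≤ θ * d₃ + d₂ + (c - w) := by
    rw [hmdef]; exact (min_le_right _ _).trans (min_le_right _ _)
  have hsm : s < m := by
    rw [hmdef]
    simp only [lt_min_iff]
    exact ⟨⟨hR1, hR2⟩, ⟨hR3, hR4⟩⟩
  have hs0 : 0 ≤ s := by
    rw [hsdef]
    linarith only [dist_nonneg (x := u₂) (y := u₃), dist_nonneg (x := u₃) (y := u₁),
      dist_nonneg (x := u₁) (y := u₂), hadef, hbbdef, hcdef]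
  have hlow : ENNReal.ofReal m ≤ idist X p q := by
    simp only [idist]
    refine le_iInf fun γ => le_iInf fun hcont => le_iInf fun hsub => le_iInf fun h0 =>
      le_iInf fun h1 => ?_
    have hmemX : ∀ t ∈ Set.Icc (0:ℝ) 1, γ t ∈ X := fun t ht => hsub ⟨t, ht, rfl⟩
    -- first cut: the path leaves the open spoke through u₃ or u₄
    obtain ⟨t₁, ht₁, hclos1, hnot1⟩ := exit_lemma zero_le_one hcont hU34open
      (fun t ht => hiff34 _ (hmemX t ht)) (by rw [h0]; exact hpopen)
      (by rw [h1]; exact hq_not34)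
    have hv : γ t₁ = u₃ ∨ γ t₁ = u₄ := by
      have hcl : γ t₁ ∈ segment ℝ u₃ u₄ :=
        closure_minimal (openSegment_subset_segment ℝ u₃ u₄) (seg_closed u₃ u₄) hclos1
      rw [← insert_endpoints_openSegment] at hcl
      simp only [Set.mem_insert_iff] at hcl
      tauto
    -- second cut: going backwards from q, the path leaves the open side through u₁ or u₂
    have hgcont : ContinuousOn (fun t => γ (1 + t₁ - t)) (Set.Icc t₁ 1) := by
      apply hcont.comp ((continuous_const.sub continuous_id).continuousOn)
      intro t ht
      simp only [Pi.sub_apply, id_eq]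
      exact ⟨by linarith [ht₁.1, ht.2], by linarith [ht.1]⟩
    obtain ⟨r, hr, hclos2, hnot2⟩ := exit_lemma ht₁.2 hgcont hU12open
      (fun t ht => hiff12 _ (hmemX _ ⟨by linarith [ht₁.1, ht.2], by linarith [ht.1]⟩))
      (by show γ (1 + t₁ - t₁) ∈ _
          rw [show 1 + t₁ - t₁ = 1 by ring, h1]
          exact hqopen)
      (by show γ (1 + t₁ - 1) ∉ _
          rw [show 1 + t₁ - 1 = t₁ by ring]
          rcases hv with h | h <;> rw [h]
          · exact hu₃_not12
          · exact hu₄_not12)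
    have hclos2' : γ (1 + t₁ - r) ∈ closure (openSegment ℝ u₁ u₂) := hclos2
    set t₂ := 1 + t₁ - r with ht₂def
    have ht₂ : t₁ ≤ t₂ ∧ t₂ ≤ 1 := ⟨by rw [ht₂def]; linarith only [hr.2],
      by rw [ht₂def]; linarith only [hr.1, ht₁.1]⟩
    have hw' : γ t₂ = u₁ ∨ γ t₂ = u₂ := by
      have hcl : γ t₂ ∈ segment ℝ u₁ u₂ :=
        closure_minimal (openSegment_subset_segment ℝ u₁ u₂) (seg_closed u₁ u₂) hclos2'
      rw [← insert_endpoints_openSegment] at hcl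
      simp only [Set.mem_insert_iff] at hcl
      tauto
    -- chain inequality
    set uu : ℕ → ℝ := fun n => match n with
      | 0 => (0:ℝ) | 1 => t₁ | 2 => t₂ | _+3 => (1:ℝ) with huudef
    have huu0 : uu 0 = 0 := rfl
    have huu1 : uu 1 = t₁ := rfl
    have huu2 : uu 2 = t₂ := rfl
    have huu3 : uu 3 = 1 := rfl
    have hmono : Monotone uu := by
      apply monotone_nat_of_le_succ
      intro n
      match n with
      | 0 => rw [huu0, huu1]; exact ht₁.1
      | 1 => rw [huu1, huu2]; exact ht₂.1
      | 2 => rw [huu2, huu3]; exact ht₂.2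
      | (n+3) => exact le_refl (1:ℝ)
    have humem : ∀ i, uu i ∈ Set.Icc (0:ℝ) 1 := by
      intro i
      match i with
      | 0 => rw [huu0]; exact ⟨le_refl _, zero_le_one⟩
      | 1 => rw [huu1]; exact ⟨ht₁.1, ht₁.2⟩
      | 2 => rw [huu2]; exact ⟨le_trans ht₁.1 ht₂.1, ht₂.2⟩
      | (i+3) => exact ⟨zero_le_one, le_refl (1:ℝ)⟩
    have hvar := eVariationOn.sum_le (f := γ) (n := 3) hmono humem
    have hsum : ∑ i ∈ Finset.range 3, edist (γ (uu (i+1))) (γ (uu i))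
        = edist (γ t₁) (γ 0) + edist (γ t₂) (γ t₁) + edist (γ 1) (γ t₂) := by
      rw [Finset.sum_range_succ, Finset.sum_range_succ, Finset.sum_range_one]
    rw [hsum] at hvar
    refine le_trans ?_ hvar
    rw [h0, h1, edist_dist, edist_dist, edist_dist,
      ← ENNReal.ofReal_add dist_nonneg dist_nonneg,
      ← ENNReal.ofReal_add (by positivity) dist_nonneg]
    apply ENNReal.ofReal_le_ofReal
    rcases hv with h | h <;> rcases hw' with h' | h' <;> rw [h, h']
    · linarith only [hm1, hp3, hq1, dist_comm u₃ p, dist_comm u₁ u₃, hbbdef]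
    · linarith only [hm2, hp3, hq2, dist_comm u₃ p, dist_comm u₂ u₃, hadef]
    · linarith only [hm3, hp4, hq1, dist_comm u₄ p, dist_comm u₁ u₄, hd₁def]
    · linarith only [hm4, hp4, hq2, dist_comm u₄ p, dist_comm u₂ u₄, hd₂def]
  -- conclude
  have hchain : idist X p q ≤ idiam X := by
    have h1 : idist X p q ≤ ecc X p := by
      simp only [ecc]
      exact le_iSup₂ (f := fun q' (_ : q' ∈ X) => idist X p q') q hqX
    have h2 : ecc X p ≤ idiam X := by
      simp only [idiam]
      exact le_iSup₂ (f := fun p' (_ : p' ∈ X) => ecc X p') p hpX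
    exact h1.trans h2
  have hfinal : ENNReal.ofReal s < idiam X :=
    lt_of_lt_of_le ((ENNReal.ofReal_lt_ofReal_iff (lt_of_le_of_lt hs0 hsm)).2 hsm)
      (hlow.trans hchain)
  rw [show (‖u₁ - u₂‖ + ‖u₂ - u₃‖ + ‖u₃ - u₁‖) / 2 = s by
    rw [hsdef]; simp [hcdef, hadef, hbbdef, dist_eq_norm]]
  exact hfinal
end
end
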